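/- arXiv:2112.01788 — 5 statements merged into one kernel-verified Lean document; each statement's English description precedes it below -/
import Mathlib

section
/- Let k ≥ 1 be a positive integer and define Θ_{k,1} : [0,∞) → [0,∞) by Θ_{k,1}(t) = t/(g(t)·(g∘g)(t)⋯g^{∘k}(t)), where g(t) = log(e+t) and g^{∘k} denotes k-fold composition. Then the associated sequence M_p = sup_{t≥0} t^p e^{−Θ_{k,1}(t)} is a sequence of positive finite real numbers which is logarithmically convex and quasi-analytic, i.e. ∑_{p≥1} M_{p−1}/M_p = +∞. -/
open MeasureTheory Filter
open scoped ENNReal NNReal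

noncomputable section

abbrev Esp (d : ℕ) := EuclideanSpace ℝ (Fin d)

/-- Japanese bracket `⟨x⟩ = (1+‖x‖²)^{1/2}`. -/
def jap {d : ℕ} (x : Esp d) : ℝ := Real.sqrt (1 + ‖x‖ ^ 2)

/-- First-order partial derivative in direction `i`. -/
def pderivI {d : ℕ} (i : Fin d) (f : Esp d → ℂ) : Esp d → ℂ :=
  fun x => fderiv ℝ f x (EuclideanSpace.single i 1)

/-- Multi-index partial derivative `∂^β`. -/
def mderiv {d : ℕ} (β : Fin d → ℕ) (f : Esp d → ℂ) : Esp d → ℂ :=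
  Fin.foldr d (fun i g => (pderivI i)^[β i] g) f

/-- `ρ` is a contraction mapping: `|ρ(x)-ρ(y)| ≤ L‖x-y‖` for some `0 ≤ L < 1`. -/
def IsContractionMap {d : ℕ} (ρ : Esp d → ℝ) : Prop :=
  ∃ L : ℝ, 0 ≤ L ∧ L < 1 ∧ ∀ x y : Esp d, |ρ x - ρ y| ≤ L * ‖x - y‖

/-- `ω` is `γ`-thick with respect to the density `ρ`. -/
def IsThick {d : ℕ} (γ : ℝ) (ρ : Esp d → ℝ) (ω : Set (Esp d)) : Prop :=
  ∀ x : Esp d, ENNReal.ofReal γ * volume (Metric.ball x (ρ x)) ≤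
    volume (ω ∩ Metric.ball x (ρ x))

/-- The Bang degree `n_{t,M,r}`. -/
def bangDeg (M : ℕ → ℝ) (t r : ℝ) : ℕ :=
  sSup {N : ℕ | (∑ n ∈ Finset.Icc 1 N, if -Real.log t < (n : ℝ) then M (n - 1) / M n else 0) < r}

/-- `γ_M(p) = sup_{1≤j≤p} j (M_{j+1}M_{j-1}/M_j² - 1)`. -/
def gammaM (M : ℕ → ℝ) (p : ℕ) : ℝ :=
  ⨆ j : {j : ℕ // 1 ≤ j ∧ j ≤ p}, (j : ℝ) * (M (j + 1) * M (j - 1) / (M j) ^ 2 - 1)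

/-- `Γ_M(p) = 4 e^{4+4γ_M(p)}`. -/
def GammaM (M : ℕ → ℝ) (p : ℕ) : ℝ := 4 * Real.exp (4 + 4 * gammaM M p)

/-- Quasi-analyticity: `∑_{p≥1} M_{p-1}/M_p = +∞`. -/
def QuasiAnalytic (M : ℕ → ℝ) : Prop :=
  Tendsto (fun N => ∑ p ∈ Finset.Icc 1 N, M (p - 1) / M p) atTop atTop

/-- The standard one-dimensional Hermite functions. -/
def hermite1 (k : ℕ) (x : ℝ) : ℝ :=
  ((-1 : ℝ) ^ k / Real.sqrt (2 ^ k * k.factorial * Real.sqrt Real.pi)) *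
    Real.exp (x ^ 2 / 2) * iteratedDeriv k (fun y => Real.exp (-y ^ 2)) x

/-- The `d`-dimensional Hermite functions `Φ_α`. -/
def hermiteFun {d : ℕ} (α : Fin d → ℕ) (x : Esp d) : ℝ :=
  ∏ j, hermite1 (α j) (x j)

/-- The Hermite coefficient `⟨f, Φ_α⟩_{L²(ℝ^d)}`. -/
def hermiteCoeff {d : ℕ} (f : Esp d → ℂ) (α : Fin d → ℕ) : ℂ :=
  ∫ x, f x * ((hermiteFun α x : ℝ) : ℂ)

/-- The set of values whose supremum defines `M_p = sup_{t ≥ 0} t^p e^{-Θ(t)}`. -/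
def MseqSet (Θ : ℝ → ℝ) (p : ℕ) : Set ℝ :=
  {y : ℝ | ∃ t : ℝ, 0 ≤ t ∧ y = t ^ p * Real.exp (-Θ t)}

/-- The sequence `M_p = sup_{t ≥ 0} t^p e^{-Θ(t)}` associated with `Θ`. -/
def Mseq (Θ : ℝ → ℝ) (p : ℕ) : ℝ := sSup (MseqSet Θ p)

/-- The square of the norm of the weighted Gelfand–Shilov space `GS_Θ`,
`‖f‖²_{GS_Θ} = ∑_α e^{2Θ(|α|)} |⟨f,Φ_α⟩|²`. -/
def GSThetaNormSq {d : ℕ} (Θ : ℝ → ℝ) (f : Esp d → ℂ) : ℝ≥0∞ :=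
  ∑' α : Fin d → ℕ,
    ENNReal.ofReal (Real.exp (2 * Θ ((∑ i, α i : ℕ) : ℝ)) * ‖hermiteCoeff f α‖ ^ 2)

/-- `g(t) = log(e+t)`. -/
def gfun (t : ℝ) : ℝ := Real.log (Real.exp 1 + t)

/-- `Θ_{k,1}(t) = t / (g(t)(g∘g)(t)⋯g^{∘k}(t))`. -/
def ThetaK1 (k : ℕ) (t : ℝ) : ℝ := t / ∏ j ∈ Finset.Icc 1 k, gfun^[j] t

lemma gfun_one_le {t : ℝ} (ht : 0 ≤ t) : 1 ≤ gfun t := by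
  have h := Real.log_le_log (Real.exp_pos 1) (by linarith : Real.exp 1 ≤ Real.exp 1 + t)
  rwa [Real.log_exp] at h

lemma gfun_nonneg {t : ℝ} (ht : 0 ≤ t) : 0 ≤ gfun t := le_trans zero_le_one (gfun_one_le ht)

lemma gfun_mono {s t : ℝ} (hs : 0 ≤ s) (h : s ≤ t) : gfun s ≤ gfun t :=
  Real.log_le_log (by positivity) (by linarith)

lemma gfun_le_add_two {t : ℝ} (ht : 0 ≤ t) : gfun t ≤ t + 2 := by
  have h := Real.log_le_sub_one_of_pos (x := Real.exp 1 + t) (by positivity)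
  have he : Real.exp 1 ≤ 3 := by
    have := Real.exp_one_lt_d9; linarith
  unfold gfun; linarith

lemma gfun_two_mul_le {t : ℝ} (ht : 0 ≤ t) : gfun (2 * t) ≤ Real.log 2 + gfun t := by
  have h : gfun (2 * t) ≤ Real.log (2 * (Real.exp 1 + t)) := by
    apply Real.log_le_log (by positivity)
    have := Real.exp_pos 1; linarith
  rw [Real.log_mul (by norm_num) (by positivity)] at h
  exact h

lemma iter_nonneg (j : ℕ) {t : ℝ} (ht : 0 ≤ t) : 0 ≤ gfun^[j] t := by
  induction j with
  | zero => simpa using ht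
  | succ n ih => rw [Function.iterate_succ_apply']; exact gfun_nonneg ih

lemma iter_one_le (j : ℕ) (hj : 1 ≤ j) {t : ℝ} (ht : 0 ≤ t) : 1 ≤ gfun^[j] t := by
  obtain ⟨i, rfl⟩ := Nat.exists_eq_add_of_le hj
  rw [add_comm, Function.iterate_succ_apply']
  exact gfun_one_le (iter_nonneg i ht)

lemma iter_mono (j : ℕ) {s t : ℝ} (hs : 0 ≤ s) (h : s ≤ t) : gfun^[j] s ≤ gfun^[j] t := by
  induction j with
  | zero => simpa using h
  | succ n ih =>
    rw [Function.iterate_succ_apply', Function.iterate_succ_apply']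
    exact gfun_mono (iter_nonneg n hs) ih

lemma iter_le_add' (j : ℕ) (hj : 1 ≤ j) {t : ℝ} (ht : 0 ≤ t) : gfun^[j] t ≤ gfun t + 2 * j := by
  induction j with
  | zero => omega
  | succ n ih =>
    rcases Nat.eq_zero_or_pos n with rfl | hn
    · simp
    · rw [Function.iterate_succ_apply']
      have h1 : gfun (gfun^[n] t) ≤ gfun^[n] t + 2 := gfun_le_add_two (iter_nonneg n ht)
      have := ih hn
      push_cast; linarith

def Lfun (k : ℕ) (t : ℝ) : ℝ := ∏ j ∈ Finset.Icc 1 k, gfun^[j] t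
def Dfun (j : ℕ) (t : ℝ) : ℝ := ∏ i ∈ Finset.range j, (Real.exp 1 + gfun^[i] t)⁻¹

lemma Lfun_one_le (k : ℕ) {t : ℝ} (ht : 0 ≤ t) : 1 ≤ Lfun k t := by
  calc (1:ℝ) = ∏ _j ∈ Finset.Icc 1 k, (1:ℝ) := by simp
    _ ≤ Lfun k t := Finset.prod_le_prod (by intros; norm_num)
        (fun j hj => iter_one_le j (Finset.mem_Icc.1 hj).1 ht)

lemma Lfun_pos (k : ℕ) {t : ℝ} (ht : 0 ≤ t) : 0 < Lfun k t :=
  lt_of_lt_of_le one_pos (Lfun_one_le k ht)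

lemma Lfun_mono (k : ℕ) {s t : ℝ} (hs : 0 ≤ s) (h : s ≤ t) : Lfun k s ≤ Lfun k t :=
  Finset.prod_le_prod (fun j hj => iter_nonneg j hs) (fun j hj => iter_mono j hs h)

lemma Dfun_nonneg (j : ℕ) {t : ℝ} (ht : 0 ≤ t) : 0 ≤ Dfun j t :=
  Finset.prod_nonneg fun i _ => by
    have := iter_nonneg i ht; have := Real.exp_pos 1; positivity

lemma Dfun_succ (j : ℕ) (t : ℝ) :
    Dfun (j + 1) t = Dfun j t * (Real.exp 1 + gfun^[j] t)⁻¹ := Finset.prod_range_succ _ _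

lemma gfun_hasDerivAt {t : ℝ} (h : 0 < Real.exp 1 + t) :
    HasDerivAt gfun (Real.exp 1 + t)⁻¹ t := by
  have h1 : HasDerivAt (fun s : ℝ => Real.exp 1 + s) 1 t := (hasDerivAt_id t).const_add _
  have h2 := (Real.hasDerivAt_log (ne_of_gt h)).comp t h1
  have h3 : HasDerivAt gfun ((Real.exp 1 + t)⁻¹ * 1) t := h2
  simpa using h3

lemma iter_hasDerivAt (j : ℕ) {t : ℝ} (ht : 0 ≤ t) :
    HasDerivAt (gfun^[j]) (Dfun j t) t := by
  induction j with
  | zero => simpa [Dfun] using hasDerivAt_id t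
  | succ n ih =>
    have h0 : (0:ℝ) < Real.exp 1 + gfun^[n] t := by
      have := iter_nonneg n ht; have := Real.exp_pos 1; linarith
    have h := (gfun_hasDerivAt h0).comp t ih
    rw [Dfun_succ, mul_comm]
    exact (Function.iterate_succ' gfun n ▸ h)

lemma Dfun_le_inv_mul (j : ℕ) {t : ℝ} (ht : 0 ≤ t) :
    Dfun (j + 1) t ≤ ((Real.exp 1 + t) * Lfun j t)⁻¹ := by
  induction j with
  | zero => simp [Dfun_succ, Dfun, Lfun]
  | succ n ih =>
    rw [Dfun_succ]
    have h0 : (0:ℝ) < Real.exp 1 + gfun^[n+1] t := by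
      have := iter_nonneg (n+1) ht; have := Real.exp_pos 1; linarith
    have h1 : 1 ≤ gfun^[n+1] t := iter_one_le _ (by omega) ht
    have hL : Lfun (n + 1) t = Lfun n t * gfun^[n+1] t := Finset.prod_Icc_succ_top (by omega) _
    have het : (0:ℝ) < Real.exp 1 + t := by have := Real.exp_pos 1; linarith
    have hLp : 0 < Lfun n t := Lfun_pos n ht
    calc Dfun (n + 1) t * (Real.exp 1 + gfun^[n+1] t)⁻¹
        ≤ ((Real.exp 1 + t) * Lfun n t)⁻¹ * (gfun^[n+1] t)⁻¹ := by
          apply mul_le_mul ih _ (by positivity) (by positivity)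
          apply inv_anti₀ (by linarith)
          have := Real.exp_pos 1; linarith
      _ = ((Real.exp 1 + t) * Lfun (n + 1) t)⁻¹ := by
          rw [hL]; field_simp

lemma gfun_le_Lfun (n : ℕ) (hn : 1 ≤ n) {t : ℝ} (ht : 0 ≤ t) : gfun t ≤ Lfun n t := by
  induction n, hn using Nat.le_induction with
  | base => simp [Lfun]
  | succ n hn ih =>
    have hLeq : Lfun (n + 1) t = Lfun n t * gfun^[n+1] t := Finset.prod_Icc_succ_top (by omega) _
    have h1 : 1 ≤ gfun^[n+1] t := iter_one_le _ (by omega) ht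
    nlinarith [gfun_nonneg ht, Lfun_pos n ht]

lemma Lfun_hasDerivAt (k : ℕ) {t : ℝ} (ht : 0 ≤ t) :
    ∃ d, HasDerivAt (Lfun k) d t ∧ 0 ≤ d ∧
      d * ((Real.exp 1 + t) * gfun t) ≤ k * Lfun k t := by
  induction k with
  | zero =>
    refine ⟨0, ?_, le_refl 0, by simp⟩
    have : Lfun 0 = fun _ : ℝ => (1:ℝ) := by
      funext s; simp [Lfun]
    rw [this]; exact hasDerivAt_const t 1
  | succ n ih =>
    obtain ⟨d, hd, hd0, hdb⟩ := ih
    have hiter := iter_hasDerivAt (n + 1) ht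
    have hLeq : Lfun (n + 1) = fun s => Lfun n s * gfun^[n+1] s := by
      funext s; exact Finset.prod_Icc_succ_top (by omega) _
    have hmul := hd.mul hiter
    refine ⟨d * gfun^[n+1] t + Lfun n t * Dfun (n + 1) t, by rw [hLeq]; exact hmul, ?_, ?_⟩
    · have h1 := iter_nonneg (n+1) ht
      have h2 := (Lfun_pos n ht).le
      have h3 := Dfun_nonneg (n+1) ht
      positivity
    · have het : (0:ℝ) < Real.exp 1 + t := by have := Real.exp_pos 1; linarith
      have hg1 : 1 ≤ gfun t := gfun_one_le ht
      have hLn : 0 < Lfun n t := Lfun_pos n ht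
      have hin1 : 1 ≤ gfun^[n+1] t := iter_one_le _ (by omega) ht
      -- first term
      have e1 : d * gfun^[n+1] t * ((Real.exp 1 + t) * gfun t)
          ≤ n * Lfun n t * gfun^[n+1] t := by
        have := mul_le_mul_of_nonneg_right hdb (le_trans zero_le_one hin1)
        nlinarith
      -- second term
      have e2 : Lfun n t * Dfun (n + 1) t * ((Real.exp 1 + t) * gfun t)
          ≤ Lfun n t * gfun^[n+1] t := by
        have h4 := Dfun_le_inv_mul n ht
        have h5 : Dfun (n+1) t * ((Real.exp 1 + t) * Lfun n t) ≤ 1 := by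
          calc Dfun (n+1) t * ((Real.exp 1 + t) * Lfun n t)
              ≤ ((Real.exp 1 + t) * Lfun n t)⁻¹ * ((Real.exp 1 + t) * Lfun n t) := by
                apply mul_le_mul_of_nonneg_right h4 (by positivity)
            _ = 1 := by field_simp
        -- need g t ≤ Lfun (n+1)... here: g t * 1 ≤ g... goal: L*D*((e+t)*g) ≤ L * g^[n+1]
        have hgle : gfun t ≤ Lfun n t * gfun^[n+1] t := by
          rcases Nat.eq_zero_or_pos n with rfl | hn
          · simp [Lfun]
          · have : gfun t ≤ Lfun n t := gfun_le_Lfun n hn ht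
            nlinarith
        nlinarith [Dfun_nonneg (n+1) ht]
      have hLs : Lfun (n+1) t = Lfun n t * gfun^[n+1] t := by rw [hLeq]
      push_cast
      rw [add_mul, hLs]
      nlinarith [e1, e2]

lemma ThetaK1_eq (k : ℕ) (t : ℝ) : ThetaK1 k t = t / Lfun k t := rfl

lemma Theta_nonneg (k : ℕ) {t : ℝ} (ht : 0 ≤ t) : 0 ≤ ThetaK1 k t := by
  rw [ThetaK1_eq]; exact div_nonneg ht (Lfun_pos k ht).le

lemma Theta_le_self (k : ℕ) {t : ℝ} (ht : 0 ≤ t) : ThetaK1 k t ≤ t := by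
  rw [ThetaK1_eq]; exact div_le_self ht (Lfun_one_le k ht)

lemma theta_hasDerivAt (k : ℕ) (hk : 1 ≤ k) {t : ℝ} (ht : 0 ≤ t) :
    ∃ θ', HasDerivAt (ThetaK1 k) θ' t ∧
      (2 * (k:ℝ) ≤ gfun t → 1 / (2 * Lfun k t) ≤ θ') := by
  obtain ⟨d, hd, hd0, hdb⟩ := Lfun_hasDerivAt k ht
  have hLpos := Lfun_pos k ht
  have hdiv : HasDerivAt (fun s => s / Lfun k s)
      ((1 * Lfun k t - t * d) / (Lfun k t)^2) t :=
    (hasDerivAt_id t).div hd (ne_of_gt hLpos)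
  refine ⟨_, hdiv, ?_⟩
  intro hg
  have het : (0:ℝ) < Real.exp 1 + t := by have := Real.exp_pos 1; linarith
  have hk1 : (1:ℝ) ≤ (k:ℝ) := by exact_mod_cast hk
  have hgt : 0 < gfun t := lt_of_lt_of_le zero_lt_one (gfun_one_le ht)
  -- t * d ≤ L / 2
  have htd : t * d ≤ Lfun k t / 2 := by
    have h1 : t * (d * ((Real.exp 1 + t) * gfun t)) ≤ t * (k * Lfun k t) :=
      mul_le_mul_of_nonneg_left hdb ht
    have he1 := Real.exp_pos 1
    have h2 : t * (k * Lfun k t) ≤ (Real.exp 1 + t) * (k * Lfun k t) := by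
      apply mul_le_mul_of_nonneg_right (by linarith)
      positivity
    have h3 : (t * d) * gfun t ≤ k * Lfun k t := by
      have h4 : ((t*d) * gfun t) * (Real.exp 1 + t) ≤ (k * Lfun k t) * (Real.exp 1 + t) := by
        nlinarith
      exact le_of_mul_le_mul_right h4 het
    nlinarith
  rw [div_le_div_iff₀ (by positivity) (by positivity)]
  nlinarith

lemma theta_mono (k : ℕ) (hk : 1 ≤ k) :
    MonotoneOn (ThetaK1 k) (Set.Ici (Real.exp (2 * k))) := by
  have ht0pos : (0:ℝ) < Real.exp (2 * k) := Real.exp_pos _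
  have hgk : ∀ t : ℝ, Real.exp (2 * k) ≤ t → 2 * (k:ℝ) ≤ gfun t := by
    intro t ht
    have h1 : Real.log (Real.exp (2 * k)) ≤ gfun t := by
      apply Real.log_le_log (Real.exp_pos _)
      have := Real.exp_pos 1; linarith
    rwa [Real.log_exp] at h1
  apply monotoneOn_of_deriv_nonneg (convex_Ici _)
  · intro t ht
    have ht' : 0 ≤ t := le_trans ht0pos.le ht
    obtain ⟨θ', hθ, _⟩ := theta_hasDerivAt k hk ht'
    exact hθ.continuousAt.continuousWithinAt
  · intro t ht
    rw [interior_Ici] at ht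
    have ht' : 0 ≤ t := le_trans ht0pos.le (le_of_lt ht)
    obtain ⟨θ', hθ, _⟩ := theta_hasDerivAt k hk ht'
    exact hθ.differentiableAt.differentiableWithinAt
  · intro t ht
    rw [interior_Ici] at ht
    have ht' : 0 ≤ t := le_trans ht0pos.le (le_of_lt ht)
    obtain ⟨θ', hθ, hb⟩ := theta_hasDerivAt k hk ht'
    rw [hθ.deriv]
    have := hb (hgk t (le_of_lt ht))
    have := Lfun_pos k ht'
    have : (0:ℝ) < 1 / (2 * Lfun k t) := by positivity
    linarith [hb (hgk t (le_of_lt ht))]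

lemma phi_antitone (k : ℕ) (hk : 1 ≤ k) (p : ℕ) {T : ℝ}
    (hT : Real.exp (2 * k) ≤ T) (hTp : 2 * (p:ℝ) ≤ ThetaK1 k T) :
    ∀ t, T ≤ t → t ^ p * Real.exp (-(ThetaK1 k t)) ≤ T ^ p * Real.exp (-(ThetaK1 k T)) := by
  have ht0pos : (0:ℝ) < Real.exp (2 * k) := Real.exp_pos _
  have hTpos : 0 < T := lt_of_lt_of_le ht0pos hT
  set φ : ℝ → ℝ := fun t => (p:ℝ) * Real.log t - ThetaK1 k t with hφ
  have hgk : ∀ t : ℝ, Real.exp (2 * k) ≤ t → 2 * (k:ℝ) ≤ gfun t := by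
    intro t ht
    have h1 : Real.log (Real.exp (2 * k)) ≤ gfun t := by
      apply Real.log_le_log (Real.exp_pos _)
      have := Real.exp_pos 1; linarith
    rwa [Real.log_exp] at h1
  have hderiv : ∀ t : ℝ, 0 < t →
      ∃ θ', HasDerivAt φ ((p:ℝ) / t - θ') t ∧ HasDerivAt (ThetaK1 k) θ' t ∧
        (2 * (k:ℝ) ≤ gfun t → 1 / (2 * Lfun k t) ≤ θ') := by
    intro t ht
    obtain ⟨θ', hθ, hb⟩ := theta_hasDerivAt k hk ht.le
    refine ⟨θ', ?_, hθ, hb⟩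
    have hlog := (Real.hasDerivAt_log (ne_of_gt ht)).const_mul (p:ℝ)
    have := hlog.sub hθ
    have h3 : HasDerivAt φ ((p:ℝ) * t⁻¹ - θ') t := this
    simpa [mul_comm, div_eq_mul_inv] using h3
  have hanti : AntitoneOn φ (Set.Ici T) := by
    apply antitoneOn_of_deriv_nonpos (convex_Ici _)
    · intro t ht
      obtain ⟨θ', h1, _, _⟩ := hderiv t (lt_of_lt_of_le hTpos ht)
      exact h1.continuousAt.continuousWithinAt
    · intro t ht
      rw [interior_Ici] at ht
      obtain ⟨θ', h1, _, _⟩ := hderiv t (lt_trans hTpos ht)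
      exact h1.differentiableAt.differentiableWithinAt
    · intro t ht
      rw [interior_Ici] at ht
      have htpos : 0 < t := lt_trans hTpos ht
      obtain ⟨θ', h1, hθ, hb⟩ := hderiv t htpos
      rw [h1.deriv]
      have hgkt := hgk t (le_trans hT ht.le)
      have hb' := hb hgkt
      -- Θ t ≥ Θ T ≥ 2p
      have hmono := theta_mono k hk (Set.mem_Ici.2 hT)
        (Set.mem_Ici.2 (le_trans hT ht.le)) ht.le
      have hΘt : 2 * (p:ℝ) ≤ ThetaK1 k t := le_trans hTp hmono
      have hL := Lfun_pos k htpos.le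
      -- p / t ≤ 1 / (2 L t)
      have hpt : (p:ℝ) / t ≤ 1 / (2 * Lfun k t) := by
        rw [div_le_div_iff₀ htpos (by positivity)]
        rw [ThetaK1_eq] at hΘt
        rw [le_div_iff₀ hL] at hΘt
        nlinarith
      linarith
  intro t ht
  have h := hanti (Set.mem_Ici.2 (le_refl T)) (Set.mem_Ici.2 ht) ht
  have htpos : 0 < t := lt_of_lt_of_le hTpos ht
  have e1 : ∀ s : ℝ, 0 < s → Real.exp (φ s) = s ^ p * Real.exp (-(ThetaK1 k s)) := by
    intro s hs
    show Real.exp ((p:ℝ) * Real.log s - ThetaK1 k s) = s ^ p * Real.exp (-(ThetaK1 k s))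
    rw [sub_eq_add_neg, Real.exp_add, Real.exp_nat_mul, Real.exp_log hs]
  calc t ^ p * Real.exp (-(ThetaK1 k t)) = Real.exp (φ t) := (e1 t htpos).symm
    _ ≤ Real.exp (φ T) := Real.exp_le_exp.2 h
    _ = T ^ p * Real.exp (-(ThetaK1 k T)) := e1 T hTpos

lemma Lfun_le_pow (k : ℕ) {t : ℝ} (ht : 0 ≤ t) :
    Lfun k t ≤ (gfun t + 2 * k) ^ k := by
  have h : Lfun k t ≤ ∏ _j ∈ Finset.Icc 1 k, (gfun t + 2 * k) := by
    apply Finset.prod_le_prod (fun j hj => iter_nonneg j ht)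
    intro j hj
    obtain ⟨hj1, hjk⟩ := Finset.mem_Icc.1 hj
    have := iter_le_add' j hj1 ht
    have : (j:ℝ) ≤ (k:ℝ) := by exact_mod_cast hjk
    have h2 := iter_le_add' j hj1 ht
    linarith
  rwa [Finset.prod_const, Nat.card_Icc, Nat.add_sub_cancel] at h

/-- the exponent bound tends to -∞ -/
lemma exponent_tendsto (k p : ℕ) (hk : 1 ≤ k) :
    Tendsto (fun t => (p:ℝ) * (gfun t + 2 * k) - t / (gfun t + 2 * k) ^ k) atTop atBot := by
  set u : ℝ → ℝ := fun t => gfun t + 2 * k with hu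
  have hrat : Tendsto (fun t => t / u t ^ (k + 1)) atTop atTop := by
    rw [tendsto_atTop]
    intro b0
    set b : ℝ := max b0 1 with hb
    have hbpos : (0:ℝ) < b := lt_of_lt_of_le one_pos (le_max_right _ _)
    set c : ℝ := (1 + 2 * k) ^ (k + 1) with hc
    have hcpos : (0:ℝ) < c := by positivity
    -- log(e+t)^(k+1)/(e+t) → 0
    have hq : Tendsto (fun t : ℝ => Real.log (Real.exp 1 + t) ^ (k+1) / (1 * (Real.exp 1 + t) + 0))
        atTop (nhds 0) :=
      (Real.tendsto_pow_log_div_mul_add_atTop 1 0 (k+1) one_ne_zero).comp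
        (tendsto_atTop_add_const_left _ _ tendsto_id)
    have hqev : ∀ᶠ t : ℝ in atTop,
        Real.log (Real.exp 1 + t) ^ (k+1) / (1 * (Real.exp 1 + t) + 0) < 1 / (2 * b * c) :=
      hq.eventually (gt_mem_nhds (by positivity))
    filter_upwards [hqev, eventually_ge_atTop (Real.exp 1), eventually_ge_atTop (0:ℝ)]
      with t hqt hte ht0
    have het : (0:ℝ) < Real.exp 1 + t := by have := Real.exp_pos 1; linarith
    have hg1 : 1 ≤ gfun t := gfun_one_le ht0
    have hupos : 0 < u t := by simp only [hu]; positivity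
    -- u t ≤ (1+2k) g t
    have hule : u t ≤ (1 + 2 * k) * gfun t := by
      simp only [hu]; nlinarith [gfun_one_le ht0]
    have hupow : u t ^ (k+1) ≤ c * gfun t ^ (k+1) := by
      calc u t ^ (k+1) ≤ ((1 + 2 * k) * gfun t) ^ (k+1) := by
            apply pow_le_pow_left₀ hupos.le hule
        _ = c * gfun t ^ (k+1) := by rw [mul_pow]
    have hlogb : gfun t ^ (k+1) < (Real.exp 1 + t) / (2 * b * c) := by
      have h2 : Real.log (Real.exp 1 + t) ^ (k+1) < (1 * (Real.exp 1 + t) + 0) / (2*b*c) := by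
        rw [div_lt_div_iff₀ (by linarith : (0:ℝ) < 1 * (Real.exp 1 + t) + 0) (by positivity)] at hqt
        rw [lt_div_iff₀ (by positivity)]
        nlinarith [hqt]
      calc gfun t ^ (k+1) = Real.log (Real.exp 1 + t) ^ (k+1) := by rw [gfun]
        _ < (1 * (Real.exp 1 + t) + 0) / (2*b*c) := h2
        _ = (Real.exp 1 + t) / (2 * b * c) := by ring_nf
    have h3 : u t ^ (k+1) ≤ (Real.exp 1 + t) / (2 * b) := by
      calc u t ^ (k+1) ≤ c * gfun t ^ (k+1) := hupow
        _ ≤ c * ((Real.exp 1 + t) / (2 * b * c)) := by nlinarith [hlogb]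
        _ = (Real.exp 1 + t) / (2 * b) := by field_simp
    have h4 : (Real.exp 1 + t) ≤ 2 * t := by linarith [Real.exp_pos 1, hte]
    have h5 : u t ^ (k+1) ≤ t / b := by
      calc u t ^ (k+1) ≤ (Real.exp 1 + t) / (2 * b) := h3
        _ ≤ 2 * t / (2 * b) := by apply div_le_div_of_nonneg_right h4 (by positivity) |>.trans_eq rfl
        _ = t / b := by field_simp
    rw [le_div_iff₀ (by positivity)]
    calc b0 * u t ^ (k+1) ≤ b * u t ^ (k+1) := by
          apply mul_le_mul_of_nonneg_right (le_max_left _ _) (by positivity)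
      _ ≤ b * (t / b) := by nlinarith [h5]
      _ = t := by field_simp
  rw [tendsto_atBot]
  intro b
  filter_upwards [hrat.eventually_ge_atTop ((p:ℝ) + max 0 (-b)), eventually_ge_atTop (0:ℝ)]
    with t hr ht0
  have hg1 : 1 ≤ gfun t := gfun_one_le ht0
  have hu1 : 1 ≤ u t := by
    have h2k : (0:ℝ) ≤ 2*k := by positivity
    simp only [hu]; linarith
  have hupos : (0:ℝ) < u t := lt_of_lt_of_le one_pos hu1
  have key : (p:ℝ) * u t - t / u t ^ k = u t * ((p:ℝ) - t / u t ^ (k+1)) := by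
    field_simp
    ring
  rw [key]
  have hneg : (p:ℝ) - t / u t ^ (k+1) ≤ -(max 0 (-b)) := by linarith
  have : u t * ((p:ℝ) - t / u t ^ (k+1)) ≤ 1 * ((p:ℝ) - t / u t ^ (k+1)) := by
    apply mul_le_mul_of_nonpos_right ?_ (by linarith [le_max_left (0:ℝ) (-b)])
    · exact hu1
  calc u t * ((p:ℝ) - t / u t ^ (k+1)) ≤ 1 * ((p:ℝ) - t / u t ^ (k+1)) := this
    _ ≤ -(max 0 (-b)) := by linarith
    _ ≤ b := by
        cases le_total 0 (-b) with
        | inl h => rw [max_eq_right h]; linarith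
        | inr h => rw [max_eq_left (by linarith : -b ≤ 0)]; linarith

lemma MseqSet_nonneg {Θ : ℝ → ℝ} {p : ℕ} {y : ℝ} (hy : y ∈ MseqSet Θ p) : 0 ≤ y := by
  obtain ⟨t, ht, rfl⟩ := hy
  positivity

lemma Mseq_bddAbove (k : ℕ) (hk : 1 ≤ k) (p : ℕ) : BddAbove (MseqSet (ThetaK1 k) p) := by
  obtain ⟨T0, hT0⟩ := eventually_atTop.1 (tendsto_atBot.1 (exponent_tendsto k p hk) 0)
  set T : ℝ := max T0 1 with hT
  have hT1 : (1:ℝ) ≤ T := le_max_right _ _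
  refine ⟨max (T ^ p) 1, ?_⟩
  rintro y ⟨t, ht0, rfl⟩
  rcases le_total t T with hle | hge
  · apply le_max_of_le_left
    have h1 : Real.exp (-(ThetaK1 k t)) ≤ 1 := by
      rw [Real.exp_le_one_iff]
      linarith [Theta_nonneg k ht0]
    calc t ^ p * Real.exp (-(ThetaK1 k t)) ≤ t ^ p * 1 := by
          apply mul_le_mul_of_nonneg_left h1 (by positivity)
      _ = t ^ p := mul_one _
      _ ≤ T ^ p := pow_le_pow_left₀ ht0 hle p
  · apply le_max_of_le_right
    have htpos : (0:ℝ) < t := lt_of_lt_of_le one_pos (le_trans hT1 hge)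
    obtain ⟨u, hu⟩ : ∃ u : ℝ, u = gfun t + 2 * k := ⟨_, rfl⟩
    have hg1 : 1 ≤ gfun t := gfun_one_le ht0
    have hupos : (0:ℝ) < u := by
      have h2k : (0:ℝ) ≤ 2*k := by positivity
      rw [hu]; linarith
    have hexp : (p:ℝ) * u - t / u ^ k ≤ 0 := by
      rw [hu]; exact hT0 t (le_trans (le_max_left _ _) hge)
    have hlogu : Real.log t ≤ u := by
      have h2 : Real.log t ≤ Real.log (Real.exp 1 + t) := by
        apply Real.log_le_log htpos
        have := Real.exp_pos 1; linarith
      have : (0:ℝ) ≤ 2*k := by positivity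
      simp only [hu, gfun]; linarith
    have hΘ : t / u ^ k ≤ ThetaK1 k t := by
      rw [hu, ThetaK1_eq]
      apply div_le_div_of_nonneg_left ht0 (Lfun_pos k ht0) (Lfun_le_pow k ht0)
    calc t ^ p * Real.exp (-(ThetaK1 k t))
        = Real.exp ((p:ℝ) * Real.log t - ThetaK1 k t) := by
          rw [sub_eq_add_neg, Real.exp_add, Real.exp_nat_mul, Real.exp_log htpos]
      _ ≤ Real.exp 0 := by
          apply Real.exp_le_exp.2
          have : (p:ℝ) * Real.log t ≤ (p:ℝ) * u :=
            mul_le_mul_of_nonneg_left hlogu (by positivity)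
          linarith
      _ = 1 := Real.exp_zero

lemma Mseq_pos (k : ℕ) (hk : 1 ≤ k) (p : ℕ) : 0 < Mseq (ThetaK1 k) p := by
  have hmem : Real.exp (-(ThetaK1 k 1)) ∈ MseqSet (ThetaK1 k) p :=
    ⟨1, zero_le_one, by rw [one_pow, one_mul]⟩
  have := le_csSup (Mseq_bddAbove k hk p) hmem
  calc (0:ℝ) < Real.exp (-(ThetaK1 k 1)) := Real.exp_pos _
    _ ≤ Mseq (ThetaK1 k) p := this

lemma Mseq_logconvex (k : ℕ) (hk : 1 ≤ k) (p : ℕ) (hp : 1 ≤ p) :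
    Mseq (ThetaK1 k) p ^ 2 ≤ Mseq (ThetaK1 k) (p + 1) * Mseq (ThetaK1 k) (p - 1) := by
  set R : ℝ := Mseq (ThetaK1 k) (p + 1) * Mseq (ThetaK1 k) (p - 1) with hR
  have hRpos : 0 < R := mul_pos (Mseq_pos k hk _) (Mseq_pos k hk _)
  have hub : ∀ y ∈ MseqSet (ThetaK1 k) p, y ≤ Real.sqrt R := by
    rintro y ⟨t, ht0, rfl⟩
    have hy2 : (t ^ p * Real.exp (-(ThetaK1 k t))) ^ 2 ≤ R := by
      have hid : (t ^ p * Real.exp (-(ThetaK1 k t))) ^ 2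
          = (t ^ (p+1) * Real.exp (-(ThetaK1 k t))) * (t ^ (p-1) * Real.exp (-(ThetaK1 k t))) := by
        have : p + 1 + (p - 1) = 2 * p := by omega
        rw [mul_mul_mul_comm, ← pow_add, this, pow_mul]
        ring
      rw [hid]
      have h1 : t ^ (p+1) * Real.exp (-(ThetaK1 k t)) ≤ Mseq (ThetaK1 k) (p+1) :=
        le_csSup (Mseq_bddAbove k hk _) ⟨t, ht0, rfl⟩
      have h2 : t ^ (p-1) * Real.exp (-(ThetaK1 k t)) ≤ Mseq (ThetaK1 k) (p-1) :=
        le_csSup (Mseq_bddAbove k hk _) ⟨t, ht0, rfl⟩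
      have hn1 : (0:ℝ) ≤ t ^ (p+1) * Real.exp (-(ThetaK1 k t)) := by positivity
      have hn2 : (0:ℝ) ≤ t ^ (p-1) * Real.exp (-(ThetaK1 k t)) := by positivity
      exact mul_le_mul h1 h2 hn2 (le_trans hn1 h1)
    calc t ^ p * Real.exp (-(ThetaK1 k t))
        = Real.sqrt ((t ^ p * Real.exp (-(ThetaK1 k t))) ^ 2) := by
          rw [Real.sqrt_sq (by positivity)]
      _ ≤ Real.sqrt R := Real.sqrt_le_sqrt hy2
  have hle : Mseq (ThetaK1 k) p ≤ Real.sqrt R :=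
    Real.sSup_le hub (Real.sqrt_nonneg _)
  calc Mseq (ThetaK1 k) p ^ 2 ≤ Real.sqrt R ^ 2 := by
        apply pow_le_pow_left₀ (Mseq_pos k hk p).le hle
    _ = R := Real.sq_sqrt hRpos.le

lemma gfun_tendsto : Tendsto gfun atTop atTop :=
  Real.tendsto_log_atTop.comp (tendsto_atTop_add_const_left _ _ tendsto_id)

lemma iter_tendsto (j : ℕ) : Tendsto (gfun^[j]) atTop atTop := by
  induction j with
  | zero => simpa using tendsto_id
  | succ n ih =>
    rw [Function.iterate_succ']
    exact gfun_tendsto.comp ih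

lemma telescope_bound (k : ℕ) (p : ℕ) (hp : 1 ≤ p) :
    gfun^[k+1] ((p:ℝ) + 1) - gfun^[k+1] (p:ℝ) ≤ 1 / ((p:ℝ) * Lfun k p) := by
  have hp1 : (1:ℝ) ≤ (p:ℝ) := by exact_mod_cast hp
  have hlt : (p:ℝ) < (p:ℝ) + 1 := by linarith
  have hcont : ContinuousOn (gfun^[k+1]) (Set.Icc (p:ℝ) ((p:ℝ)+1)) := by
    intro x hx
    have hx0 : (0:ℝ) ≤ x := by have := hx.1; linarith
    exact (iter_hasDerivAt (k+1) hx0).continuousAt.continuousWithinAt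
  have hdiff : ∀ x ∈ Set.Ioo (p:ℝ) ((p:ℝ)+1), HasDerivAt (gfun^[k+1]) (Dfun (k+1) x) x := by
    intro x hx
    have hx0 : (0:ℝ) ≤ x := by have := hx.1; linarith
    exact iter_hasDerivAt (k+1) hx0
  obtain ⟨ξ, hξmem, hξ⟩ := exists_hasDerivAt_eq_slope (gfun^[k+1]) (fun x => Dfun (k+1) x)
    hlt hcont hdiff
  have hξ0 : (0:ℝ) ≤ ξ := by have := hξmem.1; linarith
  have hslope : gfun^[k+1] ((p:ℝ)+1) - gfun^[k+1] (p:ℝ) = Dfun (k+1) ξ := by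
    have h : ((p:ℝ) + 1 - p) = 1 := by ring
    rw [h, div_one] at hξ
    exact hξ.symm
  rw [hslope]
  have h1 : Dfun (k+1) ξ ≤ ((Real.exp 1 + ξ) * Lfun k ξ)⁻¹ := Dfun_le_inv_mul k hξ0
  have hLξ : Lfun k (p:ℝ) ≤ Lfun k ξ := Lfun_mono k (by linarith) hξmem.1.le
  have hLp : 0 < Lfun k (p:ℝ) := Lfun_pos k (by linarith)
  have hpe : (p:ℝ) ≤ Real.exp 1 + ξ := by
    have := Real.exp_pos 1; have := hξmem.1; linarith
  calc Dfun (k+1) ξ ≤ ((Real.exp 1 + ξ) * Lfun k ξ)⁻¹ := h1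
    _ ≤ ((p:ℝ) * Lfun k p)⁻¹ := by
        apply inv_anti₀ (by positivity)
        apply mul_le_mul hpe hLξ hLp.le (by positivity)
    _ = 1 / ((p:ℝ) * Lfun k p) := (one_div _).symm

def Acon (k : ℕ) : ℝ := 2 ^ k * (8 * (k + 1))

lemma Acon_pos (k : ℕ) : 0 < Acon k := by unfold Acon; positivity

lemma Acon_one_le (k : ℕ) : 1 ≤ Acon k := by
  unfold Acon
  have h1 : (1:ℝ) ≤ 2 ^ k := by
    have := pow_le_pow_left₀ (by norm_num : (0:ℝ) ≤ 1) (by norm_num : (1:ℝ) ≤ 2) k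
    simpa using this
  nlinarith [Nat.cast_nonneg (α := ℝ) k]

lemma log_Acon (k : ℕ) : Real.log (Acon k) ≤ 2 * k + 3 := by
  unfold Acon
  rw [Real.log_mul (by positivity) (by positivity), Real.log_pow,
    Real.log_mul (by norm_num) (by positivity)]
  have h2 : Real.log 2 ≤ 1 := by
    have := Real.log_le_sub_one_of_pos (by norm_num : (0:ℝ) < 2); linarith
  have h8 : Real.log 8 ≤ 3 := by
    have : (8:ℝ) = 2^3 := by norm_num
    rw [this, Real.log_pow]; push_cast; linarith
  have hk1 : Real.log ((k:ℝ) + 1) ≤ (k:ℝ) := by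
    have := Real.log_le_sub_one_of_pos (by positivity : (0:ℝ) < (k:ℝ) + 1); linarith
  have hknn : (0:ℝ) ≤ (k:ℝ) := Nat.cast_nonneg k
  nlinarith

lemma log_le_two_sqrt {x : ℝ} (hx : 1 ≤ x) : Real.log x ≤ 2 * Real.sqrt x := by
  have hs : 0 < Real.sqrt x := Real.sqrt_pos.2 (by linarith)
  have h1 : Real.log (Real.sqrt x) ≤ Real.sqrt x - 1 := Real.log_le_sub_one_of_pos hs
  have h2 : Real.log (Real.sqrt x) = Real.log x / 2 := by
    rw [Real.log_sqrt (by linarith)]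
  linarith [h2 ▸ h1]

set_option maxHeartbeats 2000000 in
/-- the key ratio bound -/
lemma ratio_bound (k : ℕ) (hk : 1 ≤ k) :
    ∃ p₀ : ℕ, 1 ≤ p₀ ∧ ∀ p : ℕ, p₀ ≤ p →
      1 / (Acon k * p * Lfun k p) ≤
        Mseq (ThetaK1 k) (p - 1) / Mseq (ThetaK1 k) p := by
  obtain ⟨A, hA⟩ : ∃ A : ℝ, A = Acon k := ⟨_, rfl⟩
  obtain ⟨Creq, hCreq⟩ : ∃ C : ℝ, C = 16 * k^2 + 2 * Real.log A + 2 * k * Real.log (1 + 2*k) + 2 * k := ⟨_, rfl⟩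
  refine ⟨⌈Real.exp Creq⌉₊ + 2, by omega, ?_⟩
  intro p hp
  have hApos : 0 < A := hA ▸ Acon_pos k
  have hA1 : 1 ≤ A := hA ▸ Acon_one_le k
  have hkR : (1:ℝ) ≤ (k:ℝ) := by exact_mod_cast hk
  have hp1 : 1 ≤ p := by omega
  have hpR : (1:ℝ) ≤ (p:ℝ) := by exact_mod_cast hp1
  have hp0 : (0:ℝ) ≤ (p:ℝ) := by linarith
  -- p is big: log p ≥ Creq
  have hpbig : Real.exp Creq ≤ (p:ℝ) := by
    calc Real.exp Creq ≤ (⌈Real.exp Creq⌉₊ : ℝ) := Nat.le_ceil _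
      _ ≤ (p:ℝ) := by exact_mod_cast le_trans (by omega : ⌈Real.exp Creq⌉₊ ≤ ⌈Real.exp Creq⌉₊ + 2) hp
  have hgp : Creq ≤ gfun (p:ℝ) := by
    have h1 : Real.log (Real.exp Creq) ≤ gfun (p:ℝ) := by
      apply Real.log_le_log (Real.exp_pos _)
      have := Real.exp_pos 1; linarith
    rwa [Real.log_exp] at h1
  have hgp1 : 1 ≤ gfun (p:ℝ) := gfun_one_le hp0
  have hLp1 : 1 ≤ Lfun k (p:ℝ) := Lfun_one_le k hp0
  have hLppos : 0 < Lfun k (p:ℝ) := Lfun_pos k hp0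
  obtain ⟨T, hT⟩ : ∃ T : ℝ, T = A * p * Lfun k p := ⟨_, rfl⟩
  have hTp : (p:ℝ) ≤ T := by
    rw [hT]
    calc (p:ℝ) = 1 * p * 1 := by ring
      _ ≤ A * p * Lfun k p := by
          apply mul_le_mul (mul_le_mul hA1 le_rfl hp0 hApos.le) hLp1 zero_le_one
          positivity
  have hTpos : 0 < T := by rw [hT]; positivity
  -- (i) exp(2k) ≤ T
  have hexp2k : Real.exp (2 * k) ≤ T := by
    apply le_trans _ hTp
    apply le_trans (Real.exp_le_exp.2 _) hpbig
    rw [hCreq]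
    have hlogA : 0 ≤ Real.log A := Real.log_nonneg hA1
    have hlog2k : 0 ≤ Real.log (1 + 2*(k:ℝ)) := Real.log_nonneg (by linarith)
    nlinarith
  -- (ii) base: gfun T ≤ 2 * gfun p
  have hgT : gfun T ≤ 2 * gfun (p:ℝ) := by
    have hsplit : gfun T ≤ Real.log A + Real.log (Lfun k (p:ℝ)) + gfun (p:ℝ) := by
      have hle : Real.exp 1 + T ≤ A * Lfun k (p:ℝ) * (Real.exp 1 + (p:ℝ)) := by
        have hAL1 : 1 ≤ A * Lfun k (p:ℝ) := by nlinarith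
        have he := Real.exp_pos 1
        rw [hT]; nlinarith
      calc gfun T ≤ Real.log (A * Lfun k (p:ℝ) * (Real.exp 1 + (p:ℝ))) := by
            apply Real.log_le_log (by have := Real.exp_pos 1; unfold gfun at *; positivity) hle
        _ = Real.log A + Real.log (Lfun k (p:ℝ)) + Real.log (Real.exp 1 + (p:ℝ)) := by
            rw [Real.log_mul (by positivity) (by positivity),
              Real.log_mul (by positivity) (by positivity)]
        _ = Real.log A + Real.log (Lfun k (p:ℝ)) + gfun (p:ℝ) := rfl
    have hlogL : Real.log (Lfun k (p:ℝ)) ≤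
        (k:ℝ) * Real.log (1 + 2*k) + (k:ℝ) * Real.log (gfun (p:ℝ)) := by
      calc Real.log (Lfun k (p:ℝ)) ≤ Real.log ((gfun (p:ℝ) + 2*k)^k) := by
            apply Real.log_le_log hLppos (Lfun_le_pow k hp0)
        _ = (k:ℝ) * Real.log (gfun (p:ℝ) + 2*k) := by rw [Real.log_pow]
        _ ≤ (k:ℝ) * Real.log ((1 + 2*k) * gfun (p:ℝ)) := by
            apply mul_le_mul_of_nonneg_left _ (by positivity)
            apply Real.log_le_log (by positivity)
            nlinarith
        _ = (k:ℝ) * (Real.log (1 + 2*k) + Real.log (gfun (p:ℝ))) := by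
            rw [Real.log_mul (by positivity) (by positivity)]
        _ = (k:ℝ) * Real.log (1 + 2*k) + (k:ℝ) * Real.log (gfun (p:ℝ)) := by ring
    -- k log g ≤ g/2 since g ≥ 16k²
    have hg16 : 16 * (k:ℝ)^2 ≤ gfun (p:ℝ) := by
      rw [hCreq] at hgp
      have hlogA : 0 ≤ Real.log A := Real.log_nonneg hA1
      have hlog2k : 0 ≤ Real.log (1 + 2*(k:ℝ)) := Real.log_nonneg (by linarith)
      nlinarith
    have hklog : (k:ℝ) * Real.log (gfun (p:ℝ)) ≤ gfun (p:ℝ) / 2 := by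
      have h1 : Real.log (gfun (p:ℝ)) ≤ 2 * Real.sqrt (gfun (p:ℝ)) := log_le_two_sqrt hgp1
      have h2 : (4:ℝ) * k ≤ Real.sqrt (gfun (p:ℝ)) := by
        have h4 : Real.sqrt (16 * (k:ℝ)^2) ≤ Real.sqrt (gfun (p:ℝ)) := Real.sqrt_le_sqrt hg16
        have h3 : Real.sqrt (16 * (k:ℝ)^2) = 4 * k := by
          rw [show (16:ℝ) * (k:ℝ)^2 = (4*(k:ℝ))^2 by ring, Real.sqrt_sq (by positivity)]
        linarith
      have hsq : Real.sqrt (gfun (p:ℝ)) * Real.sqrt (gfun (p:ℝ)) = gfun (p:ℝ) :=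
        Real.mul_self_sqrt (by linarith)
      have hmul1 : (k:ℝ) * Real.log (gfun (p:ℝ)) ≤ (k:ℝ) * (2 * Real.sqrt (gfun (p:ℝ))) :=
        mul_le_mul_of_nonneg_left h1 (by linarith)
      have hmul2 : (4:ℝ) * k * Real.sqrt (gfun (p:ℝ))
          ≤ Real.sqrt (gfun (p:ℝ)) * Real.sqrt (gfun (p:ℝ)) :=
        mul_le_mul_of_nonneg_right h2 (Real.sqrt_nonneg _)
      linarith
    have hrest : Real.log A + (k:ℝ) * Real.log (1 + 2*k) ≤ gfun (p:ℝ) / 2 := by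
      rw [hCreq] at hgp
      have hksq : (0:ℝ) ≤ 16 * (k:ℝ)^2 := by positivity
      have hlogA : 0 ≤ Real.log A := Real.log_nonneg hA1
      have hlog2k : (0:ℝ) ≤ (k:ℝ) * Real.log (1 + 2*(k:ℝ)) := by
        have := Real.log_nonneg (by linarith : (1:ℝ) ≤ 1 + 2*(k:ℝ))
        positivity
      linarith
    linarith
  -- iterates double bound
  have hiter2 : ∀ j, 1 ≤ j → gfun^[j] T ≤ 2 * gfun^[j] (p:ℝ) := by
    intro j hj
    induction j, hj using Nat.le_induction with
    | base => simpa using hgT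
    | succ n hn ih =>
      rw [Function.iterate_succ_apply', Function.iterate_succ_apply']
      have h0T : 0 ≤ gfun^[n] T := iter_nonneg n hTpos.le
      have h0p : 0 ≤ gfun^[n] (p:ℝ) := iter_nonneg n hp0
      calc gfun (gfun^[n] T) ≤ gfun (2 * gfun^[n] (p:ℝ)) := gfun_mono h0T ih
        _ ≤ Real.log 2 + gfun (gfun^[n] (p:ℝ)) := gfun_two_mul_le h0p
        _ ≤ 2 * gfun (gfun^[n] (p:ℝ)) := by
            have h2 : Real.log 2 ≤ 1 := by
              have := Real.log_le_sub_one_of_pos (by norm_num : (0:ℝ) < 2); linarith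
            have := gfun_one_le h0p
            linarith
  -- L T ≤ 2^k L p
  have hLT : Lfun k T ≤ 2^k * Lfun k (p:ℝ) := by
    have h1 : Lfun k T ≤ ∏ j ∈ Finset.Icc 1 k, (2 * gfun^[j] (p:ℝ)) := by
      apply Finset.prod_le_prod (fun j hj => iter_nonneg j hTpos.le)
      intro j hj
      exact hiter2 j (Finset.mem_Icc.1 hj).1
    rw [Finset.prod_mul_distrib, Finset.prod_const, Nat.card_Icc, Nat.add_sub_cancel] at h1
    exact h1
  have hLTpos : 0 < Lfun k T := Lfun_pos k hTpos.le
  -- Θ T ≥ 8(k+1) p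
  have hΘT : 8 * ((k:ℝ) + 1) * p ≤ ThetaK1 k T := by
    rw [ThetaK1_eq]
    rw [le_div_iff₀ hLTpos]
    have h2 : (8:ℝ) * ((k:ℝ)+1) * p * (2^k * Lfun k (p:ℝ)) = A * p * Lfun k (p:ℝ) := by
      rw [hA]; unfold Acon; push_cast; ring
    calc 8 * ((k:ℝ) + 1) * p * Lfun k T ≤ 8 * ((k:ℝ)+1) * p * (2^k * Lfun k (p:ℝ)) := by
          apply mul_le_mul_of_nonneg_left hLT (by positivity)
      _ = A * p * Lfun k (p:ℝ) := h2
      _ = T := hT.symm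
  have h2p : 2 * (p:ℝ) ≤ ThetaK1 k T := by
    have h1 : 2 * (p:ℝ) ≤ 8 * ((k:ℝ) + 1) * p := by nlinarith
    linarith
  -- lower bound for M p
  obtain ⟨s, hs⟩ : ∃ s : ℝ, s = p * Lfun k (p:ℝ) := ⟨_, rfl⟩
  have hspos : 0 < s := by rw [hs]; positivity
  have hsp : (p:ℝ) ≤ s := by
    rw [hs]
    calc (p:ℝ) = p * 1 := (mul_one _).symm
      _ ≤ p * Lfun k (p:ℝ) := mul_le_mul_of_nonneg_left hLp1 hp0
  have hΘs : ThetaK1 k s ≤ (p:ℝ) := by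
    have hLs : Lfun k (p:ℝ) ≤ Lfun k s := Lfun_mono k hp0 hsp
    calc ThetaK1 k s = s / Lfun k s := ThetaK1_eq k s
      _ ≤ s / Lfun k (p:ℝ) := div_le_div_of_nonneg_left hspos.le hLppos hLs
      _ = (p:ℝ) := by rw [hs]; field_simp
  have hlow : s ^ p * Real.exp (-(p:ℝ)) ≤ Mseq (ThetaK1 k) p := by
    have hmem : s ^ p * Real.exp (-(ThetaK1 k s)) ∈ MseqSet (ThetaK1 k) p := ⟨s, hspos.le, rfl⟩
    have h1 : s ^ p * Real.exp (-(p:ℝ)) ≤ s ^ p * Real.exp (-(ThetaK1 k s)) := by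
      apply mul_le_mul_of_nonneg_left (Real.exp_le_exp.2 (by linarith)) (by positivity)
    exact le_trans h1 (le_csSup (Mseq_bddAbove k hk p) hmem)
  -- tail bound
  have htail0 : T ^ p * Real.exp (-(ThetaK1 k T)) ≤ Mseq (ThetaK1 k) p / 2 := by
    have hTs : T = A * s := by rw [hT, hs]; ring
    have hexpA : A ^ p * Real.exp (-(ThetaK1 k T)) ≤ Real.exp (-(p:ℝ)) / 2 := by
      have hlogineq : (p:ℝ) * Real.log A + Real.log 2 ≤ ThetaK1 k T - p := by
        have hlA : Real.log A ≤ 2 * (k:ℝ) + 3 := by rw [hA]; exact log_Acon k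
        have hl2 : Real.log 2 ≤ 1 := by
          have := Real.log_le_sub_one_of_pos (by norm_num : (0:ℝ) < 2); linarith
        have h1 : (p:ℝ) * Real.log A ≤ (p:ℝ) * (2*(k:ℝ)+3) :=
          mul_le_mul_of_nonneg_left hlA hp0
        have hkp : (1:ℝ) * 1 ≤ (k:ℝ) * p := mul_le_mul hkR hpR zero_le_one (by linarith)
        have h3 : (p:ℝ) * (2*(k:ℝ)+3) + 1 ≤ 8 * ((k:ℝ)+1) * p - p := by
          ring_nf
          ring_nf at hkp
          linarith
        linarith
      calc A ^ p * Real.exp (-(ThetaK1 k T))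
          = Real.exp ((p:ℝ) * Real.log A - ThetaK1 k T) := by
            rw [sub_eq_add_neg, Real.exp_add, Real.exp_nat_mul, Real.exp_log hApos]
        _ ≤ Real.exp (-(p:ℝ) - Real.log 2) := Real.exp_le_exp.2 (by linarith)
        _ = Real.exp (-(p:ℝ)) / 2 := by
            rw [Real.exp_sub, Real.exp_log (by norm_num : (0:ℝ) < 2)]
    calc T ^ p * Real.exp (-(ThetaK1 k T))
        = s ^ p * (A ^ p * Real.exp (-(ThetaK1 k T))) := by rw [hTs, mul_pow]; ring
      _ ≤ s ^ p * (Real.exp (-(p:ℝ)) / 2) := by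
          apply mul_le_mul_of_nonneg_left hexpA (by positivity)
      _ = (s ^ p * Real.exp (-(p:ℝ))) / 2 := by ring
      _ ≤ Mseq (ThetaK1 k) p / 2 := by linarith
  -- M p ≤ T * M (p-1)
  have hMle : Mseq (ThetaK1 k) p ≤ T * Mseq (ThetaK1 k) (p - 1) := by
    have hub : ∀ y ∈ MseqSet (ThetaK1 k) p,
        y ≤ max (T * Mseq (ThetaK1 k) (p - 1)) (Mseq (ThetaK1 k) p / 2) := by
      rintro y ⟨t, ht0, rfl⟩
      rcases le_total t T with hle | hge
      · apply le_max_of_le_left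
        have hsplit : t ^ p = t * t ^ (p - 1) := by
          conv_lhs => rw [show p = (p-1) + 1 by omega]
          rw [pow_succ]; ring
        have hmem : t ^ (p-1) * Real.exp (-(ThetaK1 k t)) ∈ MseqSet (ThetaK1 k) (p-1) :=
          ⟨t, ht0, rfl⟩
        have h1 : t ^ (p-1) * Real.exp (-(ThetaK1 k t)) ≤ Mseq (ThetaK1 k) (p-1) :=
          le_csSup (Mseq_bddAbove k hk _) hmem
        calc t ^ p * Real.exp (-(ThetaK1 k t))
            = t * (t ^ (p-1) * Real.exp (-(ThetaK1 k t))) := by rw [hsplit]; ring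
          _ ≤ T * (t ^ (p-1) * Real.exp (-(ThetaK1 k t))) := by
              apply mul_le_mul_of_nonneg_right hle (by positivity)
          _ ≤ T * Mseq (ThetaK1 k) (p-1) := by
              apply mul_le_mul_of_nonneg_left h1 hTpos.le
      · apply le_max_of_le_right
        exact le_trans (phi_antitone k hk p hexp2k h2p t hge) htail0
    have h2 := Real.sSup_le hub (le_max_of_le_right (by linarith [Mseq_pos k hk p]))
    rcases max_cases (T * Mseq (ThetaK1 k) (p - 1)) (Mseq (ThetaK1 k) p / 2) with ⟨heq, _⟩ | ⟨heq, _⟩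
    · rwa [heq] at h2
    · rw [heq] at h2
      have h2' : Mseq (ThetaK1 k) p ≤ Mseq (ThetaK1 k) p / 2 := h2
      linarith [Mseq_pos k hk p]
  -- conclude
  have hMp := Mseq_pos k hk p
  have hMp1 := Mseq_pos k hk (p-1)
  have hden : 0 < Acon k * p * Lfun k p := by
    have := Acon_pos k
    positivity
  rw [div_le_div_iff₀ hden hMp]
  calc 1 * Mseq (ThetaK1 k) p ≤ T * Mseq (ThetaK1 k) (p-1) := by
        rw [one_mul]; exact hMle
    _ = Mseq (ThetaK1 k) (p - 1) * (Acon k * p * Lfun k p) := by rw [hT, hA]; ring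

lemma Mseq_quasiAnalytic (k : ℕ) (hk : 1 ≤ k) : QuasiAnalytic (Mseq (ThetaK1 k)) := by
  obtain ⟨p₀, hp₀1, hratio⟩ := ratio_bound k hk
  have hApos := Acon_pos k
  set Fn : ℕ → ℝ := fun n => gfun^[k+1] (n:ℝ) with hFn
  -- lower bound for partial sums
  have hlower : ∀ N : ℕ, p₀ ≤ N →
      (1 / Acon k) * (Fn (N+1) - Fn p₀) ≤
        ∑ p ∈ Finset.Icc 1 N, Mseq (ThetaK1 k) (p-1) / Mseq (ThetaK1 k) p := by
    intro N hN
    have h1 : ∑ p ∈ Finset.Icc p₀ N, Mseq (ThetaK1 k) (p-1) / Mseq (ThetaK1 k) p ≤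
        ∑ p ∈ Finset.Icc 1 N, Mseq (ThetaK1 k) (p-1) / Mseq (ThetaK1 k) p := by
      apply Finset.sum_le_sum_of_subset_of_nonneg
      · apply Finset.Icc_subset_Icc_left hp₀1
      · intro p _ _
        have := Mseq_pos k hk (p-1)
        have := Mseq_pos k hk p
        positivity
    have h2 : ∀ p ∈ Finset.Icc p₀ N,
        (1 / Acon k) * (Fn (p+1) - Fn p) ≤ Mseq (ThetaK1 k) (p-1) / Mseq (ThetaK1 k) p := by
      intro p hpmem
      have hpp : p₀ ≤ p := (Finset.mem_Icc.1 hpmem).1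
      have hp1 : 1 ≤ p := le_trans hp₀1 hpp
      have hpR : (0:ℝ) < (p:ℝ) := by exact_mod_cast hp1
      have htel := telescope_bound k p hp1
      have hcast : Fn (p+1) - Fn p = gfun^[k+1] ((p:ℝ) + 1) - gfun^[k+1] (p:ℝ) := by
        simp only [hFn]; push_cast; ring_nf
      have hLpos := Lfun_pos k hpR.le
      calc (1 / Acon k) * (Fn (p+1) - Fn p)
          ≤ (1 / Acon k) * (1 / ((p:ℝ) * Lfun k p)) := by
            apply mul_le_mul_of_nonneg_left _ (by positivity)
            rw [hcast]; exact htel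
        _ = 1 / (Acon k * p * Lfun k p) := by rw [one_div_mul_one_div]; ring_nf
        _ ≤ Mseq (ThetaK1 k) (p - 1) / Mseq (ThetaK1 k) p := hratio p hpp
    have h3 : ∑ p ∈ Finset.Icc p₀ N, (Fn (p+1) - Fn p) = Fn (N+1) - Fn p₀ := by
      rw [← Finset.Ico_add_one_right_eq_Icc]
      rw [Finset.sum_Ico_eq_sub _ (by omega : p₀ ≤ N + 1)]
      rw [Finset.sum_range_sub Fn, Finset.sum_range_sub Fn]
      ring
    calc (1 / Acon k) * (Fn (N+1) - Fn p₀)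
        = ∑ p ∈ Finset.Icc p₀ N, (1 / Acon k) * (Fn (p+1) - Fn p) := by
          rw [← Finset.mul_sum, h3]
      _ ≤ ∑ p ∈ Finset.Icc p₀ N, Mseq (ThetaK1 k) (p-1) / Mseq (ThetaK1 k) p :=
          Finset.sum_le_sum h2
      _ ≤ _ := h1
  -- the lower bound tends to atTop
  have htends : Tendsto (fun N : ℕ => (1 / Acon k) * (Fn (N+1) - Fn p₀)) atTop atTop := by
    apply Tendsto.const_mul_atTop (by positivity : (0:ℝ) < 1 / Acon k)
    apply tendsto_atTop_add_const_right
    have hcast : Tendsto (fun N : ℕ => ((N+1:ℕ):ℝ)) atTop atTop :=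
      tendsto_natCast_atTop_atTop.comp (tendsto_add_atTop_nat 1)
    exact (iter_tendsto (k+1)).comp hcast
  unfold QuasiAnalytic
  apply tendsto_atTop_mono' atTop _ htends
  filter_upwards [eventually_ge_atTop p₀] with N hN
  exact hlower N hN

/-- The sequence associated with `Θ_{k,1}` is a quasi-analytic sequence of positive
(finite) real numbers (Proposition `ex_theta1`). -/
theorem stmt_5 (k : ℕ) (hk : 1 ≤ k) :
    (∀ p : ℕ, BddAbove (MseqSet (ThetaK1 k) p) ∧ 0 < Mseq (ThetaK1 k) p) ∧
    (∀ p : ℕ, 1 ≤ p →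
      Mseq (ThetaK1 k) p ^ 2 ≤ Mseq (ThetaK1 k) (p + 1) * Mseq (ThetaK1 k) (p - 1)) ∧
    QuasiAnalytic (Mseq (ThetaK1 k)) :=
  ⟨fun p => ⟨Mseq_bddAbove k hk p, Mseq_pos k hk p⟩,
   fun p hp => Mseq_logconvex k hk p hp,
   Mseq_quasiAnalytic k hk⟩

end
end

section
/- Let k ≥ 1 be a positive integer, 1/2 ≤ s ≤ 1, and define Θ_{k,s} : [0,∞) → [0,∞) by Θ_{k,s}(t) = t^s/(g(t)·(g∘g)(t)⋯g^{∘k}(t)), where g(t) = log(e+t) and g^{∘k} denotes k-fold composition. Then the associated sequence M_p = sup_{t≥0} t^p e^{−Θ_{k,s}(t)} satisfies: (H1) 0 < M_p < ∞ for all p ∈ ℕ; (H2) there exist C > 0 and L ≥ 1 with p^p ≤ C L^p M_p for all p ∈ ℕ (with 0⁰ = 1); and (H3)_s: ∑_{p≥1} (M_{p−1}/M_p)^s = +∞. -/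
open MeasureTheory Filter
open scoped ENNReal NNReal

noncomputable section

/-- `Θ_{k,s}(t) = t^s / (g(t)(g∘g)(t)⋯g^{∘k}(t))`. -/
def ThetaKs (k : ℕ) (s : ℝ) (t : ℝ) : ℝ := t ^ s / ∏ j ∈ Finset.Icc 1 k, gfun^[j] t

namespace StmtAux

open Real Filter

/-! ### Basic facts about `gfun` and its iterates -/

lemma one_le_gfun {t : ℝ} (ht : 0 ≤ t) : 1 ≤ gfun t := by
  have h := Real.log_le_log (exp_pos 1) (by linarith : Real.exp 1 ≤ Real.exp 1 + t)
  rwa [Real.log_exp] at h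

lemma gfun_mono {a b : ℝ} (ha : 0 ≤ a) (hab : a ≤ b) : gfun a ≤ gfun b :=
  Real.log_le_log (by positivity) (by linarith)

lemma gfun_iter_nonneg (j : ℕ) {t : ℝ} (ht : 0 ≤ t) : 0 ≤ gfun^[j] t := by
  induction j with
  | zero => simpa
  | succ n ih =>
    rw [Function.iterate_succ_apply']
    linarith [one_le_gfun ih]

lemma one_le_gfun_iter (j : ℕ) {t : ℝ} (ht : 0 ≤ t) : 1 ≤ gfun^[j + 1] t := by
  rw [Function.iterate_succ_apply']
  exact one_le_gfun (gfun_iter_nonneg j ht)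

lemma one_le_Pk (k : ℕ) {t : ℝ} (ht : 0 ≤ t) :
    1 ≤ ∏ j ∈ Finset.Icc 1 k, gfun^[j] t := by
  have h := Finset.prod_le_prod (s := Finset.Icc 1 k) (f := fun _ => (1 : ℝ))
    (g := fun j => gfun^[j] t) (fun j _ => zero_le_one) (fun j hj => ?_)
  · rwa [Finset.prod_const_one] at h
  · obtain ⟨i, rfl⟩ : ∃ i, j = i + 1 := ⟨j - 1, by have := (Finset.mem_Icc.mp hj).1; omega⟩
    exact one_le_gfun_iter i ht

lemma Pk_pos (k : ℕ) {t : ℝ} (ht : 0 ≤ t) :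
    0 < ∏ j ∈ Finset.Icc 1 k, gfun^[j] t :=
  lt_of_lt_of_le one_pos (one_le_Pk k ht)

lemma theta_nonneg (k : ℕ) (s : ℝ) {t : ℝ} (ht : 0 ≤ t) : 0 ≤ ThetaKs k s t :=
  div_nonneg (Real.rpow_nonneg ht s) (le_of_lt (Pk_pos k ht))

lemma theta_le_rpow (k : ℕ) (s : ℝ) {t : ℝ} (ht : 0 ≤ t) : ThetaKs k s t ≤ t ^ s :=
  div_le_self (Real.rpow_nonneg ht s) (one_le_Pk k ht)

lemma theta_zero (k : ℕ) {s : ℝ} (hs : s ≠ 0) : ThetaKs k s 0 = 0 := by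
  unfold ThetaKs
  rw [Real.zero_rpow hs, zero_div]

lemma gfun_le_self {t : ℝ} (ht : 2 ≤ t) : gfun t ≤ t := by
  have h1 : Real.exp 1 + t ≤ Real.exp 1 * t := by
    nlinarith [Real.exp_one_gt_d9]
  have h2 : Real.exp 1 * t ≤ Real.exp t := by
    have h3 : (t - 1) + 1 ≤ Real.exp (t - 1) := Real.add_one_le_exp (t - 1)
    have h4 : Real.exp t = Real.exp 1 * Real.exp (t - 1) := by
      rw [← Real.exp_add]; ring_nf
    nlinarith [Real.exp_pos (1 : ℝ)]
  have := Real.log_le_log (by positivity) (h1.trans h2)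
  rwa [Real.log_exp] at this

lemma gfun_iter_le_max (j : ℕ) {t : ℝ} (ht : 0 ≤ t) : gfun^[j] t ≤ max t 2 := by
  induction j with
  | zero => simpa using le_max_left t 2
  | succ n ih =>
    rw [Function.iterate_succ_apply']
    rcases le_or_gt (gfun^[n] t) 2 with h | h
    · have h1 := gfun_mono (gfun_iter_nonneg n ht) h
      have h2 : gfun 2 ≤ 2 := gfun_le_self le_rfl
      exact le_trans (h1.trans h2) (le_max_right _ _)
    · exact le_trans (gfun_le_self h.le) ih

lemma gfun_iter_le_two_gfun (j : ℕ) {t : ℝ} (ht : 0 ≤ t) :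
    gfun^[j + 1] t ≤ 2 * gfun t := by
  rw [Function.iterate_succ_apply]
  have h1 : 1 ≤ gfun t := one_le_gfun ht
  have h2 := gfun_iter_le_max j (t := gfun t) (by linarith)
  have h3 : max (gfun t) 2 ≤ 2 * gfun t := max_le (by linarith) (by linarith)
  exact h2.trans h3

lemma Pk_le (k : ℕ) {t : ℝ} (ht : 0 ≤ t) :
    ∏ j ∈ Finset.Icc 1 k, gfun^[j] t ≤ (2 * gfun t) ^ k := by
  have h : ∏ j ∈ Finset.Icc 1 k, gfun^[j] t ≤ ∏ _j ∈ Finset.Icc 1 k, (2 * gfun t) := by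
    refine Finset.prod_le_prod (fun j _ => gfun_iter_nonneg j ht) (fun j hj => ?_)
    obtain ⟨i, rfl⟩ : ∃ i, j = i + 1 := ⟨j - 1, by have := (Finset.mem_Icc.mp hj).1; omega⟩
    exact gfun_iter_le_two_gfun i ht
  rwa [Finset.prod_const, Nat.card_Icc, Nat.add_sub_cancel] at h

lemma theta_ge (k : ℕ) (s : ℝ) {t : ℝ} (ht : 0 ≤ t) :
    t ^ s / (2 * gfun t) ^ k ≤ ThetaKs k s t := by
  unfold ThetaKs
  exact div_le_div_of_nonneg_left (Real.rpow_nonneg ht s) (Pk_pos k ht) (Pk_le k ht)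

/-! ### Tail estimate and (H1) -/

lemma gfun_le_one_add_log {t : ℝ} (ht : 2 ≤ t) : gfun t ≤ 1 + Real.log t := by
  have h1 : Real.exp 1 + t ≤ Real.exp 1 * t := by nlinarith [Real.exp_one_gt_d9]
  have h2 := Real.log_le_log (by positivity) h1
  rwa [Real.log_mul (Real.exp_ne_zero 1) (by linarith), Real.log_exp] at h2

lemma eventually_theta_ge (k : ℕ) {s : ℝ} (hs0 : 1 / 2 ≤ s) (c : ℝ) :
    ∀ᶠ t : ℝ in atTop, c * Real.log t ≤ ThetaKs k s t := by
  have hc : (0 : ℝ) < 4 ^ k * (|c| + 1) := by positivity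
  have H := (isLittleO_log_rpow_rpow_atTop (s := 1 / 2) ((k : ℝ) + 1) (by norm_num)).def
    (inv_pos.mpr hc)
  filter_upwards [H, eventually_ge_atTop (Real.exp 1), eventually_ge_atTop (2 : ℝ)]
    with t h1 h2 h3
  have ht1 : (1 : ℝ) ≤ t := by linarith
  have hlog1 : 1 ≤ Real.log t := by
    rw [← Real.log_exp 1]
    exact Real.log_le_log (exp_pos 1) h2
  have hg : gfun t ≤ 2 * Real.log t := by
    have := gfun_le_one_add_log h3
    linarith
  have hgt0 : 0 < gfun t := lt_of_lt_of_le one_pos (one_le_gfun (by linarith))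
  -- from the little-o bound
  have h1' : Real.log t ^ ((k : ℝ) + 1) ≤ (4 ^ k * (|c| + 1))⁻¹ * t ^ ((1 : ℝ) / 2) := by
    have hn1 : ‖Real.log t ^ ((k : ℝ) + 1)‖ = Real.log t ^ ((k : ℝ) + 1) := by
      rw [Real.norm_eq_abs, abs_of_nonneg (Real.rpow_nonneg (by linarith) _)]
    have hn2 : ‖t ^ ((1 : ℝ) / 2)‖ = t ^ ((1 : ℝ) / 2) := by
      rw [Real.norm_eq_abs, abs_of_nonneg (Real.rpow_nonneg (by linarith) _)]
    rw [hn1, hn2] at h1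
    exact h1
  have hpow : Real.log t ^ ((k : ℝ) + 1) = Real.log t ^ (k + 1) := by
    rw [show ((k : ℝ) + 1) = ((k + 1 : ℕ) : ℝ) by push_cast; ring, Real.rpow_natCast]
  rw [hpow] at h1'
  -- main chain
  have key : c * Real.log t * (2 * gfun t) ^ k ≤ t ^ ((1 : ℝ) / 2) := by
    have e1 : c * Real.log t * (2 * gfun t) ^ k ≤ (|c| + 1) * Real.log t * (4 * Real.log t) ^ k := by
      have hc1 : c ≤ |c| + 1 := by cases abs_cases c <;> linarith
      have e2 : (2 * gfun t) ^ k ≤ (4 * Real.log t) ^ k :=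
        pow_le_pow_left₀ (by positivity) (by linarith) k
      have e3 : c * Real.log t ≤ (|c| + 1) * Real.log t :=
        mul_le_mul_of_nonneg_right hc1 (by linarith)
      calc c * Real.log t * (2 * gfun t) ^ k
          ≤ (|c| + 1) * Real.log t * (2 * gfun t) ^ k :=
            mul_le_mul_of_nonneg_right e3 (by positivity)
        _ ≤ (|c| + 1) * Real.log t * (4 * Real.log t) ^ k := by
            refine mul_le_mul_of_nonneg_left e2 (by positivity)
    have e4 : (|c| + 1) * Real.log t * (4 * Real.log t) ^ k
        = 4 ^ k * (|c| + 1) * Real.log t ^ (k + 1) := by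
      rw [mul_pow, pow_succ]; ring
    have e5 : 4 ^ k * (|c| + 1) * Real.log t ^ (k + 1) ≤ t ^ ((1 : ℝ) / 2) := by
      have h6 := mul_le_mul_of_nonneg_left h1' hc.le
      rwa [← mul_assoc, mul_inv_cancel₀ hc.ne', one_mul] at h6
    linarith
  have hts : t ^ ((1 : ℝ) / 2) ≤ t ^ s := Real.rpow_le_rpow_of_exponent_le ht1 (by linarith)
  have hden : (0 : ℝ) < (2 * gfun t) ^ k := by positivity
  have : c * Real.log t ≤ t ^ s / (2 * gfun t) ^ k := by
    rw [le_div_iff₀ hden]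
    exact key.trans hts
  exact this.trans (theta_ge k s (by linarith))

lemma bddAbove_MseqSet (k : ℕ) {s : ℝ} (hs0 : 1 / 2 ≤ s) (p : ℕ) :
    BddAbove (MseqSet (ThetaKs k s) p) := by
  obtain ⟨T, hT⟩ := eventually_atTop.mp (eventually_theta_ge k hs0 (p : ℝ))
  refine ⟨max ((max T 1) ^ p) 1, ?_⟩
  rintro y ⟨t, ht, rfl⟩
  rcases le_or_gt t (max T 1) with h | h
  · have h1 : t ^ p ≤ (max T 1) ^ p := pow_le_pow_left₀ ht h p
    have h2 : Real.exp (-ThetaKs k s t) ≤ 1 := by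
      rw [Real.exp_le_one_iff]
      linarith [theta_nonneg k s ht]
    calc t ^ p * Real.exp (-ThetaKs k s t) ≤ (max T 1) ^ p * 1 := by
          exact mul_le_mul h1 h2 (le_of_lt (Real.exp_pos _)) (by positivity)
      _ ≤ max ((max T 1) ^ p) 1 := by rw [mul_one]; exact le_max_left _ _
  · have ht1 : (1 : ℝ) < t := lt_of_le_of_lt (le_max_right T 1) h
    have hθ := hT t (le_of_lt (lt_of_le_of_lt (le_max_left T 1) h))
    have hexp : Real.exp (-ThetaKs k s t) ≤ Real.exp (-((p : ℝ) * Real.log t)) :=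
      Real.exp_le_exp.mpr (by linarith)
    have he : Real.exp (-((p : ℝ) * Real.log t)) = (t ^ p)⁻¹ := by
      rw [Real.exp_neg, Real.exp_nat_mul, Real.exp_log (by linarith)]
    have htp : (0 : ℝ) < t ^ p := by positivity
    calc t ^ p * Real.exp (-ThetaKs k s t) ≤ t ^ p * (t ^ p)⁻¹ := by
          rw [← he]; exact mul_le_mul_of_nonneg_left hexp (by positivity)
      _ = 1 := mul_inv_cancel₀ (ne_of_gt htp)
      _ ≤ max ((max T 1) ^ p) 1 := le_max_right _ _

lemma Mseq_ge (k : ℕ) {s : ℝ} (hs0 : 1 / 2 ≤ s) (p : ℕ) {t : ℝ} (ht : 0 ≤ t) :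
    t ^ p * Real.exp (-ThetaKs k s t) ≤ Mseq (ThetaKs k s) p :=
  le_csSup (bddAbove_MseqSet k hs0 p) ⟨t, ht, rfl⟩

lemma Mseq_pos (k : ℕ) {s : ℝ} (hs0 : 1 / 2 ≤ s) (p : ℕ) :
    0 < Mseq (ThetaKs k s) p := by
  have h := Mseq_ge k hs0 p (t := 1) zero_le_one
  have : (0 : ℝ) < 1 ^ p * Real.exp (-ThetaKs k s 1) := by positivity
  linarith

lemma MseqSet_nonempty (Θ : ℝ → ℝ) (p : ℕ) : (MseqSet Θ p).Nonempty :=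
  ⟨0 ^ p * Real.exp (-Θ 0), 0, le_rfl, rfl⟩

end StmtAux

namespace StmtAux

open Real Filter

/-! ### Iterated logarithms -/

lemma tendsto_iter_log (j : ℕ) : Tendsto Real.log^[j] atTop atTop := by
  induction j with
  | zero => exact tendsto_id
  | succ n ih =>
    rw [Function.iterate_succ']
    exact Real.tendsto_log_atTop.comp ih

lemma iter_log_mono (j : ℕ) {x y : ℝ} (hx : ∀ i, i < j → 1 ≤ Real.log^[i] x)
    (hxy : x ≤ y) : Real.log^[j] x ≤ Real.log^[j] y := by
  induction j with
  | zero => simpa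
  | succ n ih =>
    rw [Function.iterate_succ_apply', Function.iterate_succ_apply']
    have h1 : 1 ≤ Real.log^[n] x := hx n n.lt_succ_self
    have h2 : Real.log^[n] x ≤ Real.log^[n] y := ih fun i hi => hx i (hi.trans n.lt_succ_self)
    exact Real.log_le_log (by linarith) h2

lemma iter_log_le_self (j : ℕ) {x : ℝ} (hx : ∀ i, i ≤ j → 1 ≤ Real.log^[i] x) :
    Real.log^[j] x ≤ x := by
  induction j with
  | zero => simp
  | succ n ih =>
    rw [Function.iterate_succ_apply']
    have h1 : 1 ≤ Real.log^[n] x := hx n n.le_succ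
    have h2 := Real.log_le_sub_one_of_pos (show (0:ℝ) < Real.log^[n] x by linarith)
    have h3 := ih fun i hi => hx i (hi.trans n.le_succ)
    linarith

lemma iter_log_succ_le_log (j : ℕ) {x : ℝ}
    (hx : ∀ i, i ≤ j + 1 → 1 ≤ Real.log^[i] x) :
    Real.log^[j + 1] x ≤ Real.log x := by
  rw [Function.iterate_succ_apply]
  refine iter_log_le_self j fun i hi => ?_
  rw [← Function.iterate_succ_apply]
  exact hx (i + 1) (by omega)

/-- A point `x` is "good" (for the parameter `k`) if it is large enough for all
the iterated-logarithm estimates we need. -/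
def Good (k : ℕ) (x : ℝ) : Prop :=
  2 ≤ x ∧ (∀ j, j ≤ k + 1 → 1 ≤ Real.log^[j] x) ∧ Real.log x ^ k ≤ x

lemma eventually_good (k : ℕ) : ∀ᶠ x : ℝ in atTop, Good k x := by
  have h1 : ∀ᶠ x : ℝ in atTop, (2 : ℝ) ≤ x := eventually_ge_atTop 2
  have h2 : ∀ m : ℕ, ∀ᶠ x : ℝ in atTop, ∀ j, j ≤ m → 1 ≤ Real.log^[j] x := by
    intro m
    induction m with
    | zero =>
      filter_upwards [eventually_ge_atTop (1 : ℝ)] with x hx j hj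
      interval_cases j
      simpa using hx
    | succ n ih =>
      filter_upwards [ih, (tendsto_iter_log (n + 1)).eventually_ge_atTop 1] with x hx hx' j hj
      rcases Nat.lt_succ_iff_lt_or_eq.mp (Nat.lt_succ_of_le hj) with h | h
      · exact hx j (by omega)
      · subst h; exact hx'
  have h3 : ∀ᶠ x : ℝ in atTop, Real.log x ^ k ≤ x := by
    have H := (isLittleO_log_rpow_rpow_atTop (s := 1) (k : ℝ) one_pos).def one_pos
    filter_upwards [H, eventually_ge_atTop (Real.exp 1)] with x hx hx'
    have hx1 : (1 : ℝ) ≤ x := le_trans (by nlinarith [Real.exp_one_gt_d9]) hx'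
    have hlog : 0 ≤ Real.log x := Real.log_nonneg hx1
    rw [Real.norm_eq_abs, Real.norm_eq_abs, Real.rpow_one,
      abs_of_nonneg (Real.rpow_nonneg hlog _), abs_of_nonneg (by linarith), one_mul,
      Real.rpow_natCast] at hx
    exact hx
  filter_upwards [h1, h2 (k + 1), h3] with x a b c
  exact ⟨a, b, c⟩

/-! ### The sequence `Q` and the points `τ` -/

/-- `Qk k x = ∏_{j=1}^k log^[j] x`. -/
def Qk (k : ℕ) (x : ℝ) : ℝ := ∏ j ∈ Finset.Icc 1 k, Real.log^[j] x

lemma one_le_Qk (k : ℕ) {x : ℝ} (hG : Good k x) : 1 ≤ Qk k x := by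
  have h := Finset.prod_le_prod (s := Finset.Icc 1 k) (f := fun _ => (1 : ℝ))
    (g := fun j => Real.log^[j] x) (fun j _ => zero_le_one)
    (fun j hj => hG.2.1 j (by have := (Finset.mem_Icc.mp hj).2; omega))
  rwa [Finset.prod_const_one] at h

lemma Qk_le_self (k : ℕ) {x : ℝ} (hG : Good k x) : Qk k x ≤ x := by
  have h : Qk k x ≤ ∏ _j ∈ Finset.Icc 1 k, Real.log x := by
    refine Finset.prod_le_prod (fun j hj => ?_) (fun j hj => ?_)
    · have := hG.2.1 j (by have := (Finset.mem_Icc.mp hj).2; omega); linarith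
    · obtain ⟨i, rfl⟩ : ∃ i, j = i + 1 :=
        ⟨j - 1, by have := (Finset.mem_Icc.mp hj).1; omega⟩
      exact iter_log_succ_le_log i fun i' hi' =>
        hG.2.1 i' (by have := (Finset.mem_Icc.mp hj).2; omega)
  rw [Finset.prod_const, Nat.card_Icc, Nat.add_sub_cancel] at h
  exact h.trans hG.2.2

lemma Qk_pos (k : ℕ) {x : ℝ} (hG : Good k x) : 0 < Qk k x :=
  lt_of_lt_of_le one_pos (one_le_Qk k hG)

lemma Qk_two_mul (k : ℕ) {x : ℝ} (hG : Good k x) :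
    Qk k (2 * x) ≤ 2 ^ k * Qk k x := by
  have hx0 : (0 : ℝ) < x := by linarith [hG.1]
  have hlog2 : Real.log 2 ≤ 1 := by
    rw [Real.log_le_iff_le_exp (by norm_num)]
    nlinarith [Real.exp_one_gt_d9]
  have key : ∀ j, 1 ≤ j → j ≤ k → Real.log^[j] (2 * x) ≤ 2 * Real.log^[j] x := by
    intro j hj1 hjk
    induction j with
    | zero => omega
    | succ n ih =>
      rcases Nat.eq_zero_or_pos n with hn | hn
      · subst hn
        show Real.log (2 * x) ≤ 2 * Real.log x
        rw [Real.log_mul (by norm_num) (ne_of_gt hx0)]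
        have h1 : 1 ≤ Real.log x := by
          have := hG.2.1 1 (by omega); simpa using this
        linarith
      · have hih := ih hn (by omega)
        rw [Function.iterate_succ_apply', Function.iterate_succ_apply']
        have h1 : 1 ≤ Real.log^[n] x := hG.2.1 n (by omega)
        have h2 : 1 ≤ Real.log^[n] (2 * x) := by
          refine le_trans h1 (iter_log_mono n (fun i hi => hG.2.1 i (by omega)) ?_)
          linarith
        have h3 := Real.log_le_log (by linarith) hih
        rw [Real.log_mul (by norm_num) (by linarith)] at h3
        have h4 : 1 ≤ Real.log (Real.log^[n] x) := by
          have h5 := hG.2.1 (n + 1) (by omega : n + 1 ≤ k + 1)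
          rwa [Function.iterate_succ_apply'] at h5
        linarith
  have h : Qk k (2 * x) ≤ ∏ j ∈ Finset.Icc 1 k, (2 * Real.log^[j] x) := by
    refine Finset.prod_le_prod (fun j hj => ?_) (fun j hj => ?_)
    · obtain ⟨i, rfl⟩ : ∃ i, j = i + 1 :=
        ⟨j - 1, by have := (Finset.mem_Icc.mp hj).1; omega⟩
      have h2 : 1 ≤ Real.log^[i+1] (2 * x) := by
        refine le_trans (hG.2.1 (i+1) (by have := (Finset.mem_Icc.mp hj).2; omega))
          (iter_log_mono (i+1) (fun i' hi' =>
            hG.2.1 i' (by have := (Finset.mem_Icc.mp hj).2; omega)) ?_)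
        linarith
      linarith
    · exact key j (Finset.mem_Icc.mp hj).1 (Finset.mem_Icc.mp hj).2
  rwa [Finset.prod_mul_distrib, Finset.prod_const, Nat.card_Icc, Nat.add_sub_cancel] at h

end StmtAux

namespace StmtAux

open Real Filter

/-! ### The points `τ_n = (n Q_n)^{1/s}` -/

/-- The near-maximizers `τ_n = (n · Q_k(n))^{1/s}`. -/
def tauKs (k : ℕ) (s : ℝ) (n : ℕ) : ℝ := ((n : ℝ) * Qk k (n : ℝ)) ^ ((1 : ℝ) / s)

section tau

variable {k : ℕ} {s : ℝ} (hs0 : 1 / 2 ≤ s) (hs1 : s ≤ 1)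

include hs0

lemma s_pos : (0 : ℝ) < s := by linarith

include hs1 in
lemma one_le_one_div_s : (1 : ℝ) ≤ 1 / s := by
  rw [le_div_iff₀ (s_pos hs0)]; linarith

lemma nQ_pos {n : ℕ} (hG : Good k (n : ℝ)) : (0 : ℝ) < (n : ℝ) * Qk k (n : ℝ) := by
  have h1 := hG.1
  have h2 := Qk_pos k hG
  nlinarith

include hs1 in
lemma self_le_tau {n : ℕ} (hG : Good k (n : ℝ)) : (n : ℝ) ≤ tauKs k s n := by
  have h1 : (1 : ℝ) ≤ (n : ℝ) := by linarith [hG.1]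
  have h2 : (n : ℝ) ≤ (n : ℝ) * Qk k (n : ℝ) := by
    nlinarith [one_le_Qk k hG]
  calc (n : ℝ) = (n : ℝ) ^ (1 : ℝ) := (Real.rpow_one _).symm
    _ ≤ (n : ℝ) ^ ((1 : ℝ) / s) :=
        Real.rpow_le_rpow_of_exponent_le h1 (one_le_one_div_s hs0 hs1)
    _ ≤ ((n : ℝ) * Qk k (n : ℝ)) ^ ((1 : ℝ) / s) :=
        Real.rpow_le_rpow (by linarith) h2 (by positivity)

include hs1 in
lemma two_le_tau {n : ℕ} (hG : Good k (n : ℝ)) : (2 : ℝ) ≤ tauKs k s n :=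
  le_trans hG.1 (self_le_tau hs0 hs1 hG)

include hs1 in
lemma tau_pos {n : ℕ} (hG : Good k (n : ℝ)) : (0 : ℝ) < tauKs k s n :=
  lt_of_lt_of_le two_pos (two_le_tau hs0 hs1 hG)

lemma tau_rpow_s {n : ℕ} (hG : Good k (n : ℝ)) :
    tauKs k s n ^ s = (n : ℝ) * Qk k (n : ℝ) := by
  rw [tauKs, ← Real.rpow_mul (le_of_lt (nQ_pos hs0 hG)),
    one_div_mul_cancel (ne_of_gt (s_pos hs0)), Real.rpow_one]

lemma log_tau {n : ℕ} (hG : Good k (n : ℝ)) :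
    Real.log (tauKs k s n) = (1 / s) * Real.log ((n : ℝ) * Qk k (n : ℝ)) :=
  Real.log_rpow (nQ_pos hs0 hG) _

include hs1 in
lemma log_tau_le {n : ℕ} (hG : Good k (n : ℝ)) :
    Real.log (tauKs k s n) ≤ 4 * Real.log (n : ℝ) := by
  have hn2 : (2 : ℝ) ≤ (n : ℝ) := hG.1
  have hQ1 := one_le_Qk k hG
  have hQn := Qk_le_self k hG
  have hlogn : 1 ≤ Real.log (n : ℝ) := hG.2.1 1 (by omega)
  have h1 : Real.log ((n : ℝ) * Qk k (n : ℝ)) = Real.log (n : ℝ) + Real.log (Qk k (n : ℝ)) :=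
    Real.log_mul (by linarith) (by linarith)
  have h2 : Real.log (Qk k (n : ℝ)) ≤ Real.log (n : ℝ) :=
    Real.log_le_log (by linarith) hQn
  have h3 : 0 ≤ Real.log ((n : ℝ) * Qk k (n : ℝ)) := by
    rw [h1]; linarith [Real.log_nonneg (le_trans one_le_two hn2), Real.log_nonneg hQ1]
  have h4 : 1 / s ≤ 2 := by
    rw [div_le_iff₀ (s_pos hs0)]; linarith
  rw [log_tau hs0 hG]
  calc (1 / s) * Real.log ((n : ℝ) * Qk k (n : ℝ))
      ≤ 2 * Real.log ((n : ℝ) * Qk k (n : ℝ)) := mul_le_mul_of_nonneg_right h4 h3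
    _ ≤ 4 * Real.log (n : ℝ) := by rw [h1]; linarith [Real.log_nonneg hQ1]

end tau

/-! ### Comparison of `gfun` iterates with iterated logs -/

lemma log_le_gfun {u : ℝ} (hu : 0 < u) : Real.log u ≤ gfun u :=
  Real.log_le_log hu (by linarith [Real.exp_pos 1])

lemma iter_log_le_gfun_iter (j : ℕ) {x t : ℝ} (hx : ∀ i, i < j → 1 ≤ Real.log^[i] x)
    (h1 : 1 ≤ x) (hxt : x ≤ t) : Real.log^[j] x ≤ gfun^[j] t := by
  induction j with
  | zero => simpa
  | succ n ih =>
    rw [Function.iterate_succ_apply', Function.iterate_succ_apply']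
    have h2 : Real.log^[n] x ≤ gfun^[n] t := ih fun i hi => hx i (hi.trans n.lt_succ_self)
    have h3 : 1 ≤ Real.log^[n] x := hx n n.lt_succ_self
    calc Real.log (Real.log^[n] x) ≤ Real.log (gfun^[n] t) :=
          Real.log_le_log (by linarith) h2
      _ ≤ gfun (gfun^[n] t) := log_le_gfun (by linarith)

/-- Lower bound for the denominator of `Θ` at `τ_n` : `P(τ_n) ≥ Q_n`. -/
lemma Qk_le_Pk_tau {k : ℕ} {s : ℝ} (hs0 : 1 / 2 ≤ s) (hs1 : s ≤ 1) {n : ℕ}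
    (hG : Good k (n : ℝ)) :
    Qk k (n : ℝ) ≤ ∏ j ∈ Finset.Icc 1 k, gfun^[j] (tauKs k s n) := by
  refine Finset.prod_le_prod (fun j hj => ?_) (fun j hj => ?_)
  · have := hG.2.1 j (by have := (Finset.mem_Icc.mp hj).2; omega); linarith
  · exact iter_log_le_gfun_iter j
      (fun i hi => hG.2.1 i (by have := (Finset.mem_Icc.mp hj).2; omega))
      (by linarith [hG.1]) (self_le_tau hs0 hs1 hG)

/-- `Θ(τ_n) ≤ n`. -/
lemma theta_tau_le {k : ℕ} {s : ℝ} (hs0 : 1 / 2 ≤ s) (hs1 : s ≤ 1) {n : ℕ}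
    (hG : Good k (n : ℝ)) : ThetaKs k s (tauKs k s n) ≤ (n : ℝ) := by
  have hτ := tau_pos hs0 hs1 hG
  have hQ := Qk_pos k hG
  have hP := Qk_le_Pk_tau hs0 hs1 hG
  have h1 : ThetaKs k s (tauKs k s n)
      ≤ ((n : ℝ) * Qk k (n : ℝ)) / Qk k (n : ℝ) := by
    unfold ThetaKs
    rw [tau_rpow_s hs0 hG]
    exact div_le_div_of_nonneg_left (le_of_lt (nQ_pos hs0 hG)) hQ hP
  rwa [mul_div_assoc, div_self (ne_of_gt hQ), mul_one] at h1

/-- Lower bound `M_n ≥ τ_n^n e^{-n}`. -/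
lemma Mseq_lower {k : ℕ} {s : ℝ} (hs0 : 1 / 2 ≤ s) (hs1 : s ≤ 1) {n : ℕ}
    (hG : Good k (n : ℝ)) :
    tauKs k s n ^ n * Real.exp (-(n : ℝ)) ≤ Mseq (ThetaKs k s) n := by
  have h1 := Mseq_ge k hs0 n (le_of_lt (tau_pos hs0 hs1 hG))
  have h2 : Real.exp (-(n : ℝ)) ≤ Real.exp (-(ThetaKs k s (tauKs k s n))) :=
    Real.exp_le_exp.mpr (by linarith [theta_tau_le hs0 hs1 hG])
  refine le_trans (mul_le_mul_of_nonneg_left h2 (pow_nonneg (le_of_lt (tau_pos hs0 hs1 hG)) n)) h1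

end StmtAux

namespace StmtAux

open Real Filter

/-! ### The elementary calculus bound producing the constant `B` -/

lemma exists_B (k : ℕ) : ∃ B : ℝ, 0 ≤ B ∧ ∀ u : ℝ, 0 ≤ u →
    u - Real.exp (u / 2) / (5 ^ k * (1 + u) ^ k) ≤ B := by
  set c : ℝ := 5 ^ k * 2 ^ k * (((2 * k + 2).factorial : ℝ) * 2 ^ (2 * k + 2)) with hc_def
  have hc : 0 < c := by positivity
  refine ⟨max 1 (c / 4), le_trans zero_le_one (le_max_left _ _), fun u hu => ?_⟩
  have hpos : 0 ≤ Real.exp (u / 2) / (5 ^ k * (1 + u) ^ k) := by positivity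
  rcases le_or_gt u 1 with hu1 | hu1
  · calc u - Real.exp (u / 2) / (5 ^ k * (1 + u) ^ k) ≤ u := by linarith
      _ ≤ 1 := hu1
      _ ≤ max 1 (c / 4) := le_max_left _ _
  · have hu1 : (1 : ℝ) ≤ u := hu1.le
    -- single Taylor term bound
    have h1 : (u / 2) ^ (2 * k + 2) / ((2 * k + 2).factorial : ℝ) ≤ Real.exp (u / 2) := by
      have hsum := Real.sum_le_exp_of_nonneg (x := u / 2) (by positivity) (2 * k + 3)
      have hterm := Finset.single_le_sum (f := fun i => (u / 2) ^ i / (i.factorial : ℝ))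
        (fun i _ => by positivity) (Finset.self_mem_range_succ (2 * k + 2))
      exact le_trans hterm hsum
    have h1' : u ^ (2 * k + 2) ≤ Real.exp (u / 2) * (2 ^ (2 * k + 2) * ((2 * k + 2).factorial : ℝ)) := by
      rw [div_pow, div_div] at h1
      exact (div_le_iff₀ (by positivity)).mp h1
    have key : u ^ 2 / c ≤ Real.exp (u / 2) / (5 ^ k * (1 + u) ^ k) := by
      rw [div_le_div_iff₀ hc (by positivity)]
      have h2 : (1 + u) ^ k ≤ (2 * u) ^ k := pow_le_pow_left₀ (by linarith) (by linarith) k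
      have h3 : u ^ (k + 2) ≤ u ^ (2 * k + 2) := pow_le_pow_right₀ hu1 (by omega)
      calc u ^ 2 * (5 ^ k * (1 + u) ^ k) ≤ u ^ 2 * (5 ^ k * (2 * u) ^ k) := by
            refine mul_le_mul_of_nonneg_left
              (mul_le_mul_of_nonneg_left h2 (by positivity)) (by positivity)
        _ = 5 ^ k * 2 ^ k * u ^ (k + 2) := by rw [mul_pow]; ring
        _ ≤ 5 ^ k * 2 ^ k * u ^ (2 * k + 2) := by
            refine mul_le_mul_of_nonneg_left h3 (by positivity)
        _ ≤ 5 ^ k * 2 ^ k * (Real.exp (u / 2) * (2 ^ (2 * k + 2) * ((2 * k + 2).factorial : ℝ))) := by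
            refine mul_le_mul_of_nonneg_left h1' (by positivity)
        _ = Real.exp (u / 2) * c := by rw [hc_def]; ring
    have h6 : (u - c / 4) * c ≤ u ^ 2 := by nlinarith [sq_nonneg (2 * u - c)]
    have h7 : u - c / 4 ≤ u ^ 2 / c := (le_div_iff₀ hc).mpr h6
    have h8 : u - Real.exp (u / 2) / (5 ^ k * (1 + u) ^ k) ≤ c / 4 := by linarith
    exact h8.trans (le_max_right _ _)

/-! ### Upper bound for `gfun` iterates along `t ≥ τ_n` -/

lemma log_five_le_two : Real.log 5 ≤ 2 := by
  rw [Real.log_le_iff_le_exp (by norm_num)]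
  have h : Real.exp 2 = Real.exp 1 * Real.exp 1 := by rw [← Real.exp_add]; norm_num
  nlinarith [Real.exp_one_gt_d9]

lemma gfun_iter_upper (k : ℕ) {n : ℕ} (hG : Good k (n : ℝ)) {t u : ℝ} (ht : 0 ≤ t)
    (hu : 0 ≤ u) (hbase : gfun t ≤ 5 * Real.log (n : ℝ) * (1 + u)) :
    ∀ j, 1 ≤ j → j ≤ k → gfun^[j] t ≤ 5 * Real.log^[j] (n : ℝ) * (1 + u) := by
  intro j hj1
  induction j, hj1 using Nat.le_induction with
  | base => intro _; simpa using hbase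
  | succ j hj ih =>
    intro hjk
    have IH := ih (by omega)
    set L := Real.log^[j] (n : ℝ) with hL_def
    have hL : 1 ≤ L := hG.2.1 j (by omega)
    have ha : 1 ≤ Real.log^[j + 1] (n : ℝ) := hG.2.1 (j + 1) (by omega)
    have haL : Real.log^[j + 1] (n : ℝ) = Real.log L := Function.iterate_succ_apply' _ _ _
    rw [Function.iterate_succ_apply']
    have h1 : gfun (gfun^[j] t) ≤ gfun (5 * L * (1 + u)) :=
      gfun_mono (gfun_iter_nonneg j ht) IH
    have hz : (5 : ℝ) ≤ 5 * L * (1 + u) := by nlinarith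
    have h2 : gfun (5 * L * (1 + u)) ≤ 1 + Real.log (5 * L * (1 + u)) :=
      gfun_le_one_add_log (by linarith)
    have h3 : Real.log (5 * L * (1 + u)) = Real.log 5 + Real.log L + Real.log (1 + u) := by
      rw [Real.log_mul (by positivity) (by positivity),
        Real.log_mul (by norm_num) (by positivity)]
    have hlogu : Real.log (1 + u) ≤ u := by
      have := Real.log_le_sub_one_of_pos (show (0 : ℝ) < 1 + u by linarith)
      linarith
    have := log_five_le_two
    set a := Real.log^[j + 1] (n : ℝ)
    have h5 : Real.log L = a := haL.symm
    calc gfun (gfun^[j] t) ≤ gfun (5 * L * (1 + u)) := h1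
      _ ≤ 1 + Real.log (5 * L * (1 + u)) := h2
      _ = 1 + Real.log 5 + a + Real.log (1 + u) := by rw [h3, h5]; ring
      _ ≤ 3 + a + u := by linarith
      _ ≤ 5 * a * (1 + u) := by nlinarith

/-! ### The upper bound `M_n ≤ τ_n^n e^{Bn}` -/

lemma Mseq_upper {k : ℕ} {s : ℝ} (hs0 : 1 / 2 ≤ s) (hs1 : s ≤ 1) {B : ℝ} (hB0 : 0 ≤ B)
    (hB : ∀ u : ℝ, 0 ≤ u → u - Real.exp (u / 2) / (5 ^ k * (1 + u) ^ k) ≤ B)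
    {n : ℕ} (hG : Good k (n : ℝ)) :
    Mseq (ThetaKs k s) n ≤ tauKs k s n ^ n * Real.exp (B * n) := by
  have hτ2 : (2 : ℝ) ≤ tauKs k s n := two_le_tau hs0 hs1 hG
  have hτ0 : (0 : ℝ) < tauKs k s n := by linarith
  have hQpos := Qk_pos k hG
  have hexpB : (1 : ℝ) ≤ Real.exp (B * n) := by
    rw [← Real.exp_zero]
    exact Real.exp_le_exp.mpr (by positivity)
  refine csSup_le (MseqSet_nonempty _ _) ?_
  rintro y ⟨t, ht, rfl⟩
  rcases le_or_gt t (tauKs k s n) with hcase | hcase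
  · have h1 : t ^ n ≤ tauKs k s n ^ n := pow_le_pow_left₀ ht hcase n
    have h2 : Real.exp (-ThetaKs k s t) ≤ 1 := by
      rw [Real.exp_le_one_iff]; linarith [theta_nonneg k s ht]
    calc t ^ n * Real.exp (-ThetaKs k s t) ≤ tauKs k s n ^ n * 1 :=
          mul_le_mul h1 h2 (le_of_lt (Real.exp_pos _)) (pow_nonneg (by linarith) n)
      _ ≤ tauKs k s n ^ n * Real.exp (B * n) := by
          refine mul_le_mul_of_nonneg_left hexpB (pow_nonneg (by linarith) n)
  · have ht0 : 0 < t := lt_trans hτ0 hcase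
    set u := Real.log (t / tauKs k s n) with hu_def
    have hu : 0 ≤ u := Real.log_nonneg ((one_le_div hτ0).mpr hcase.le)
    have htu : t = tauKs k s n * Real.exp u := by
      rw [hu_def, Real.exp_log (by positivity)]
      field_simp
    have hlogn : 1 ≤ Real.log (n : ℝ) := by
      have := hG.2.1 1 (by omega); simpa using this
    have hlogt : Real.log t = Real.log (tauKs k s n) + u := by
      rw [hu_def, Real.log_div (ne_of_gt ht0) (ne_of_gt hτ0)]; ring
    have hbase : gfun t ≤ 5 * Real.log (n : ℝ) * (1 + u) := by
      have h1 : gfun t ≤ 1 + Real.log t := gfun_le_one_add_log (le_trans hτ2 hcase.le)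
      have h2 := log_tau_le hs0 hs1 hG
      rw [hlogt] at h1
      nlinarith
    -- product bound
    have hPk : ∏ j ∈ Finset.Icc 1 k, gfun^[j] t ≤ 5 ^ k * (1 + u) ^ k * Qk k (n : ℝ) := by
      have h := Finset.prod_le_prod (s := Finset.Icc 1 k)
        (f := fun j => gfun^[j] t) (g := fun j => 5 * (1 + u) * Real.log^[j] (n : ℝ))
        (fun j _ => gfun_iter_nonneg j ht) ?_
      · rw [Finset.prod_mul_distrib, Finset.prod_const, Nat.card_Icc, Nat.add_sub_cancel] at h
        calc ∏ j ∈ Finset.Icc 1 k, gfun^[j] t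
            ≤ (5 * (1 + u)) ^ k * Qk k (n : ℝ) := h
          _ = 5 ^ k * (1 + u) ^ k * Qk k (n : ℝ) := by rw [mul_pow]
      · intro j hj
        have h' := gfun_iter_upper k hG ht hu hbase j
          (Finset.mem_Icc.mp hj).1 (Finset.mem_Icc.mp hj).2
        calc gfun^[j] t ≤ 5 * Real.log^[j] (n : ℝ) * (1 + u) := h'
          _ = 5 * (1 + u) * Real.log^[j] (n : ℝ) := by ring
    have hts : t ^ s = (n : ℝ) * Qk k (n : ℝ) * Real.exp (s * u) := by
      rw [htu, Real.mul_rpow (le_of_lt hτ0) (le_of_lt (Real.exp_pos u)),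
        tau_rpow_s hs0 hG, Real.rpow_def_of_pos (Real.exp_pos u), Real.log_exp, mul_comm u s]
    have hn0 : (0 : ℝ) < (n : ℝ) := by linarith [hG.1]
    have hΘ : (n : ℝ) * (u - B) ≤ ThetaKs k s t := by
      have hPpos := Pk_pos k ht0.le
      have h1 : t ^ s / (5 ^ k * (1 + u) ^ k * Qk k (n : ℝ)) ≤ ThetaKs k s t := by
        unfold ThetaKs
        exact div_le_div_of_nonneg_left (Real.rpow_nonneg ht0.le s) hPpos hPk
      have h2 : t ^ s / (5 ^ k * (1 + u) ^ k * Qk k (n : ℝ))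
          = (n : ℝ) * (Real.exp (s * u) / (5 ^ k * (1 + u) ^ k)) := by
        rw [hts]
        field_simp
      have h5 : Real.exp (u / 2) ≤ Real.exp (s * u) := by
        refine Real.exp_le_exp.mpr ?_
        nlinarith
      have h6 : Real.exp (u / 2) / (5 ^ k * (1 + u) ^ k)
          ≤ Real.exp (s * u) / (5 ^ k * (1 + u) ^ k) := by
        exact (div_le_div_iff_of_pos_right (by positivity)).mpr h5
      have h3 : u - B ≤ Real.exp (s * u) / (5 ^ k * (1 + u) ^ k) := by
        have h4 := hB u hu
        linarith
      calc (n : ℝ) * (u - B) ≤ (n : ℝ) * (Real.exp (s * u) / (5 ^ k * (1 + u) ^ k)) :=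
            mul_le_mul_of_nonneg_left h3 hn0.le
        _ = t ^ s / (5 ^ k * (1 + u) ^ k * Qk k (n : ℝ)) := h2.symm
        _ ≤ ThetaKs k s t := h1
    have e1 : t ^ n = tauKs k s n ^ n * Real.exp ((n : ℝ) * u) := by
      rw [htu, mul_pow, ← Real.exp_nat_mul]
    calc t ^ n * Real.exp (-ThetaKs k s t)
        = tauKs k s n ^ n * (Real.exp ((n : ℝ) * u) * Real.exp (-ThetaKs k s t)) := by
          rw [e1]; ring
      _ = tauKs k s n ^ n * Real.exp ((n : ℝ) * u - ThetaKs k s t) := by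
          rw [← Real.exp_add]; ring_nf
      _ ≤ tauKs k s n ^ n * Real.exp (B * n) := by
          refine mul_le_mul_of_nonneg_left (Real.exp_le_exp.mpr ?_) (pow_nonneg hτ0.le n)
          nlinarith [hΘ]

/-! ### Log-convexity of `M` -/

lemma Mseq_sq_le (k : ℕ) {s : ℝ} (hs0 : 1 / 2 ≤ s) (p : ℕ) :
    Mseq (ThetaKs k s) (p + 1) ^ 2 ≤ Mseq (ThetaKs k s) p * Mseq (ThetaKs k s) (p + 2) := by
  have hM0 := Mseq_pos k hs0 p
  have hM2 := Mseq_pos k hs0 (p + 2)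
  have h : Mseq (ThetaKs k s) (p + 1) ≤
      Real.sqrt (Mseq (ThetaKs k s) p * Mseq (ThetaKs k s) (p + 2)) := by
    refine csSup_le (MseqSet_nonempty _ _) ?_
    rintro y ⟨t, ht, rfl⟩
    have hy2 : (t ^ (p + 1) * Real.exp (-ThetaKs k s t)) ^ 2
        = (t ^ p * Real.exp (-ThetaKs k s t)) * (t ^ (p + 2) * Real.exp (-ThetaKs k s t)) := by
      rw [pow_succ, pow_succ, pow_succ]
      ring
    have hb : (t ^ (p + 1) * Real.exp (-ThetaKs k s t)) ^ 2
        ≤ Mseq (ThetaKs k s) p * Mseq (ThetaKs k s) (p + 2) := by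
      rw [hy2]
      exact mul_le_mul (Mseq_ge k hs0 p ht) (Mseq_ge k hs0 (p + 2) ht)
        (by positivity) hM0.le
    calc t ^ (p + 1) * Real.exp (-ThetaKs k s t)
        = Real.sqrt ((t ^ (p + 1) * Real.exp (-ThetaKs k s t)) ^ 2) :=
          (Real.sqrt_sq (by positivity)).symm
      _ ≤ Real.sqrt (Mseq (ThetaKs k s) p * Mseq (ThetaKs k s) (p + 2)) :=
          Real.sqrt_le_sqrt hb
  have h2 := pow_le_pow_left₀ (Mseq_pos k hs0 (p + 1)).le h 2
  rwa [Real.sq_sqrt (by positivity)] at h2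

/-! ### The telescoping estimate for iterated logs -/

lemma iter_log_step (m : ℕ) {x : ℝ} (hx : ∀ j, j ≤ m → 1 ≤ Real.log^[j] x) :
    Real.log^[m + 1] (x + 1) ≤ Real.log^[m + 1] x + (x * Qk m x)⁻¹ := by
  induction m with
  | zero =>
    have hx0 : 1 ≤ x := by have := hx 0 (le_refl 0); simpa using this
    show Real.log (x + 1) ≤ Real.log x + (x * Qk 0 x)⁻¹
    have hQ : Qk 0 x = 1 := by simp [Qk]
    rw [hQ, mul_one]
    have h1 : x + 1 ≤ x * Real.exp x⁻¹ := by
      have h2 := Real.add_one_le_exp x⁻¹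
      have h2' := mul_le_mul_of_nonneg_left h2 (show (0:ℝ) ≤ x by linarith)
      have h3 : x * (x⁻¹ + 1) = 1 + x := by field_simp
      linarith
    have h3 := Real.log_le_log (by linarith) h1
    rwa [Real.log_mul (by linarith) (ne_of_gt (Real.exp_pos _)), Real.log_exp] at h3
  | succ m ih =>
    have hA : 1 ≤ Real.log^[m + 1] x := hx (m + 1) (le_refl _)
    have hAx1 : 1 ≤ Real.log^[m + 1] (x + 1) := by
      refine le_trans hA (iter_log_mono (m + 1) (fun i hi => hx i (by omega)) (by linarith))
    have hprev := ih (fun j hj => hx j (by omega))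
    set A := Real.log^[m + 1] x
    set ε := (x * Qk m x)⁻¹ with hε_def
    have hx0 : 1 ≤ x := by have := hx 0 (by omega); simpa using this
    have hQpos : 0 < Qk m x := by
      refine lt_of_lt_of_le one_pos ?_
      have h := Finset.prod_le_prod (s := Finset.Icc 1 m) (f := fun _ => (1 : ℝ))
        (g := fun j => Real.log^[j] x) (fun j _ => zero_le_one)
        (fun j hj => hx j (by have := (Finset.mem_Icc.mp hj).2; omega))
      rwa [Finset.prod_const_one] at h
    have hεpos : 0 < ε := by rw [hε_def]; positivity
    -- log (A + ε) ≤ log A + ε / A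
    have h1 : A + ε ≤ A * Real.exp (ε / A) := by
      have h2 := Real.add_one_le_exp (ε / A)
      have h3 : A * (ε / A + 1) = ε + A := by field_simp
      nlinarith
    have h4 : Real.log^[m + 2] (x + 1) = Real.log (Real.log^[m + 1] (x + 1)) :=
      Function.iterate_succ_apply' _ _ _
    have h5 : Real.log^[m + 2] x = Real.log A := Function.iterate_succ_apply' _ _ _
    have h6 : Real.log (Real.log^[m + 1] (x + 1)) ≤ Real.log (A + ε) :=
      Real.log_le_log (by linarith) (by linarith)
    have h7 : Real.log (A + ε) ≤ Real.log A + ε / A := by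
      have h8 := Real.log_le_log (by linarith : (0:ℝ) < A + ε) h1
      rwa [Real.log_mul (by linarith) (ne_of_gt (Real.exp_pos _)), Real.log_exp] at h8
    have h9 : ε / A = (x * Qk (m + 1) x)⁻¹ := by
      rw [hε_def, div_eq_mul_inv, ← mul_inv]
      congr 1
      rw [Qk, Qk, Finset.prod_Icc_succ_top (by omega : 1 ≤ m + 1)]
      ring
    rw [h4, h5]
    calc Real.log (Real.log^[m + 1] (x + 1)) ≤ Real.log A + ε / A := h6.trans h7
      _ = Real.log A + (x * Qk (m + 1) x)⁻¹ := by rw [h9]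

end StmtAux

/-- The sequence associated with `Θ_{k,s}` satisfies `(H1)`, `(H2)` and `(H3)_s`
(Proposition `ex_qa_bertrand`). -/
theorem stmt_6 (k : ℕ) (hk : 1 ≤ k) (s : ℝ) (hs0 : 1 / 2 ≤ s) (hs1 : s ≤ 1) :
    (∀ p : ℕ, BddAbove (MseqSet (ThetaKs k s) p) ∧ 0 < Mseq (ThetaKs k s) p) ∧
    (∃ C : ℝ, 0 < C ∧ ∃ L : ℝ, 1 ≤ L ∧
      ∀ p : ℕ, (p : ℝ) ^ p ≤ C * L ^ p * Mseq (ThetaKs k s) p) ∧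
    Tendsto
      (fun N => ∑ p ∈ Finset.Icc 1 N,
        (Mseq (ThetaKs k s) (p - 1) / Mseq (ThetaKs k s) p) ^ s)
      atTop atTop := by
  have hs : (0 : ℝ) < s := by linarith
  refine ⟨fun p => ⟨StmtAux.bddAbove_MseqSet k hs0 p, StmtAux.Mseq_pos k hs0 p⟩, ?_, ?_⟩
  · -- (H2)
    refine ⟨1, one_pos, Real.exp 1, by nlinarith [Real.exp_one_gt_d9], fun p => ?_⟩
    rcases Nat.eq_zero_or_pos p with rfl | hp
    · have hM0 : (1 : ℝ) ≤ Mseq (ThetaKs k s) 0 := by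
        have h := StmtAux.Mseq_ge k hs0 0 (t := 0) le_rfl
        rw [pow_zero, StmtAux.theta_zero k (by linarith : s ≠ 0), neg_zero, Real.exp_zero,
          one_mul] at h
        exact h
      simpa using hM0
    · have hp1 : (1 : ℝ) ≤ (p : ℝ) := by exact_mod_cast hp
      have hθ : ThetaKs k s (p : ℝ) ≤ (p : ℝ) := by
        have h1 := StmtAux.theta_le_rpow k s (show (0:ℝ) ≤ (p:ℝ) by linarith)
        have h2 : (p : ℝ) ^ s ≤ (p : ℝ) ^ (1 : ℝ) :=
          Real.rpow_le_rpow_of_exponent_le hp1 hs1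
        rw [Real.rpow_one] at h2
        linarith
      have h3 := StmtAux.Mseq_ge k hs0 p (t := (p : ℝ)) (by linarith)
      have h4 : (p : ℝ) ^ p * Real.exp (-(p : ℝ)) ≤ Mseq (ThetaKs k s) p :=
        le_trans (mul_le_mul_of_nonneg_left (Real.exp_le_exp.mpr (by linarith))
          (by positivity)) h3
      calc (p : ℝ) ^ p = ((p : ℝ) ^ p * Real.exp (-(p : ℝ))) * Real.exp (p : ℝ) := by
            rw [mul_assoc, ← Real.exp_add]; simp
        _ ≤ Mseq (ThetaKs k s) p * Real.exp (p : ℝ) :=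
            mul_le_mul_of_nonneg_right h4 (Real.exp_nonneg _)
        _ = 1 * Real.exp 1 ^ p * Mseq (ThetaKs k s) p := by
            rw [Real.exp_one_pow]; ring
  · -- (H3)
    obtain ⟨B, hB0, hB⟩ := StmtAux.exists_B k
    have hgood : ∀ᶠ n : ℕ in atTop, StmtAux.Good k (n : ℝ) :=
      tendsto_natCast_atTop_atTop.eventually (StmtAux.eventually_good k)
    obtain ⟨P₀, hP₀⟩ := eventually_atTop.mp hgood
    set P := max P₀ 1 with hP_def
    have hPgood : ∀ n, P ≤ n → StmtAux.Good k (n : ℝ) := fun n hn =>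
      hP₀ n (le_trans (le_max_left _ _) hn)
    have hP1 : 1 ≤ P := le_max_right _ _
    set M := Mseq (ThetaKs k s) with hM_def
    have hMpos : ∀ p, 0 < M p := StmtAux.Mseq_pos k hs0
    set r : ℕ → ℝ := fun q => M (q + 1) / M q with hr_def
    have hrpos : ∀ q, 0 < r q := fun q => div_pos (hMpos _) (hMpos _)
    have hrmono : Monotone r := by
      refine monotone_nat_of_le_succ fun q => ?_
      simp only [hr_def]
      rw [div_le_div_iff₀ (hMpos q) (hMpos (q + 1))]
      have hsq := StmtAux.Mseq_sq_le k hs0 q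
      nlinarith [hMpos q, hMpos (q + 1), hMpos (q + 2)]
    have hMrat : ∀ q i, M q * r q ^ i ≤ M (q + i) := by
      intro q i
      induction i with
      | zero => simp
      | succ i ih =>
        have h1 : r q ≤ r (q + i) := hrmono (by omega)
        have h2 : M (q + i) * r (q + i) = M (q + i + 1) := by
          simp only [hr_def]
          rw [mul_comm]
          exact div_mul_cancel₀ _ (hMpos _).ne'
        calc M q * r q ^ (i + 1) = (M q * r q ^ i) * r q := by ring
          _ ≤ M (q + i) * r q := mul_le_mul_of_nonneg_right ih (hrpos q).le
          _ ≤ M (q + i) * r (q + i) := mul_le_mul_of_nonneg_left h1 (hMpos _).le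
          _ = M (q + (i + 1)) := h2
    set c : ℝ := (4 ^ (k + 1) * Real.exp (2 * B + 1))⁻¹ with hc_def
    have hcpos : 0 < c := by positivity
    set h : ℕ → ℝ := fun n => Real.log^[k + 1] (n : ℝ) with hh_def
    have key : ∀ q, P ≤ q → c * (h (q + 1) - h q) ≤ (M q / M (q + 1)) ^ s := by
      intro q hq
      have hGq := hPgood q hq
      have hG2q : StmtAux.Good k ((2 * q : ℕ) : ℝ) := hPgood (2 * q) (by omega)
      have hq1 : 1 ≤ q := le_trans hP1 hq
      have hqne : q ≠ 0 := by omega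
      have hτq := StmtAux.tau_pos hs0 hs1 hGq
      have hτ2q := StmtAux.tau_pos hs0 hs1 hG2q
      set R : ℝ := StmtAux.tauKs k s (2 * q) ^ 2 * Real.exp (2 * B + 1) / StmtAux.tauKs k s q
        with hR_def
      have hRpos : 0 < R := by positivity
      have hrR : r q ≤ R := by
        have h1 : M q * r q ^ q ≤ M (2 * q) := by
          have hmr := hMrat q q
          rwa [show q + q = 2 * q by ring] at hmr
        have h2 : M (2 * q) ≤ StmtAux.tauKs k s (2 * q) ^ (2 * q)
            * Real.exp (B * ((2 * q : ℕ) : ℝ)) :=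
          StmtAux.Mseq_upper hs0 hs1 hB0 hB hG2q
        have h3 : StmtAux.tauKs k s q ^ q * Real.exp (-(q : ℝ)) ≤ M q :=
          StmtAux.Mseq_lower hs0 hs1 hGq
        have hEq : Real.exp (2 * B + 1) ^ q = Real.exp (2 * B * (q : ℝ)) * Real.exp (q : ℝ) := by
          rw [← Real.exp_nat_mul, ← Real.exp_add]
          congr 1
          ring
        have hBexp : Real.exp (B * ((2 * q : ℕ) : ℝ)) = Real.exp (2 * B * (q : ℝ)) := by
          congr 1; push_cast; ring
        have heq : (StmtAux.tauKs k s q ^ q * Real.exp (-(q : ℝ))) * R ^ q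
            = StmtAux.tauKs k s (2 * q) ^ (2 * q) * Real.exp (B * ((2 * q : ℕ) : ℝ)) := by
          rw [hR_def, div_pow, mul_pow, hEq, ← pow_mul, hBexp, Real.exp_neg]
          field_simp
        have h5 : M q * r q ^ q ≤ M q * R ^ q := by
          calc M q * r q ^ q ≤ M (2 * q) := h1
            _ ≤ StmtAux.tauKs k s (2 * q) ^ (2 * q) * Real.exp (B * ((2 * q : ℕ) : ℝ)) := h2
            _ = (StmtAux.tauKs k s q ^ q * Real.exp (-(q : ℝ))) * R ^ q := heq.symm
            _ ≤ M q * R ^ q := mul_le_mul_of_nonneg_right h3 (pow_nonneg hRpos.le q)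
        have h4 : r q ^ q ≤ R ^ q := le_of_mul_le_mul_left h5 (hMpos q)
        exact (pow_le_pow_iff_left₀ (hrpos q).le hRpos.le hqne).mp h4
      have hterm : R⁻¹ ^ s ≤ (M q / M (q + 1)) ^ s := by
        refine Real.rpow_le_rpow (inv_nonneg.mpr hRpos.le) ?_ hs.le
        have hmr : M q / M (q + 1) = (r q)⁻¹ := by
          simp only [hr_def]
          rw [inv_div]
        rw [hmr]
        exact inv_anti₀ (hrpos q) hrR
      -- estimate R ^ s
      have hQpos := StmtAux.Qk_pos k hGq
      have hnQpos : (0 : ℝ) < (q : ℝ) * StmtAux.Qk k (q : ℝ) := StmtAux.nQ_pos hs0 hGq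
      have hRs : R ^ s ≤ 4 ^ (k + 1) * Real.exp (2 * B + 1) * ((q : ℝ) * StmtAux.Qk k (q : ℝ)) := by
        have hτqs : StmtAux.tauKs k s q ^ s = (q : ℝ) * StmtAux.Qk k (q : ℝ) :=
          StmtAux.tau_rpow_s hs0 hGq
        have hτ2qs : StmtAux.tauKs k s (2 * q) ^ s
            = ((2 * q : ℕ) : ℝ) * StmtAux.Qk k ((2 * q : ℕ) : ℝ) :=
          StmtAux.tau_rpow_s hs0 hG2q
        have h2 : (StmtAux.tauKs k s (2 * q) ^ 2) ^ s
            = (((2 * q : ℕ) : ℝ) * StmtAux.Qk k ((2 * q : ℕ) : ℝ)) ^ 2 := by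
          calc (StmtAux.tauKs k s (2 * q) ^ 2) ^ s
              = (StmtAux.tauKs k s (2 * q) ^ ((2 : ℕ) : ℝ)) ^ s := by
                rw [Real.rpow_natCast]
            _ = StmtAux.tauKs k s (2 * q) ^ (((2 : ℕ) : ℝ) * s) :=
                (Real.rpow_mul hτ2q.le _ _).symm
            _ = StmtAux.tauKs k s (2 * q) ^ (s * ((2 : ℕ) : ℝ)) := by
                rw [mul_comm (((2 : ℕ)) : ℝ) s]
            _ = (StmtAux.tauKs k s (2 * q) ^ s) ^ (((2 : ℕ)) : ℝ) :=
                Real.rpow_mul hτ2q.le _ _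
            _ = (StmtAux.tauKs k s (2 * q) ^ s) ^ (2 : ℕ) := by rw [Real.rpow_natCast]
            _ = (((2 * q : ℕ) : ℝ) * StmtAux.Qk k ((2 * q : ℕ) : ℝ)) ^ 2 := by rw [hτ2qs]
        have h3 : Real.exp (2 * B + 1) ^ s ≤ Real.exp (2 * B + 1) := by
          rw [Real.rpow_def_of_pos (Real.exp_pos _), Real.log_exp]
          refine Real.exp_le_exp.mpr ?_
          nlinarith
        have hQ2 : StmtAux.Qk k ((2 * q : ℕ) : ℝ) ≤ 2 ^ k * StmtAux.Qk k (q : ℝ) := by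
          have hqm := StmtAux.Qk_two_mul k hGq
          rwa [show ((2 * q : ℕ) : ℝ) = 2 * (q : ℝ) by push_cast; ring]
        have hRs_eq : R ^ s = (StmtAux.tauKs k s (2 * q) ^ 2) ^ s * Real.exp (2 * B + 1) ^ s
            / ((q : ℝ) * StmtAux.Qk k (q : ℝ)) := by
          rw [hR_def, Real.div_rpow (by positivity) hτq.le,
            Real.mul_rpow (by positivity) (Real.exp_pos _).le, hτqs]
        rw [hRs_eq, h2, div_le_iff₀ hnQpos]
        set X := ((2 * q : ℕ) : ℝ) * StmtAux.Qk k ((2 * q : ℕ) : ℝ) with hX_def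
        set Y := (q : ℝ) * StmtAux.Qk k (q : ℝ) with hY_def
        have hXnn : 0 ≤ X := le_of_lt (StmtAux.nQ_pos hs0 hG2q)
        have hXY : X ≤ 2 * 2 ^ k * Y := by
          rw [hX_def, hY_def]
          calc ((2 * q : ℕ) : ℝ) * StmtAux.Qk k ((2 * q : ℕ) : ℝ)
              ≤ ((2 * q : ℕ) : ℝ) * (2 ^ k * StmtAux.Qk k (q : ℝ)) := by
                refine mul_le_mul_of_nonneg_left hQ2 (by positivity)
            _ = 2 * 2 ^ k * ((q : ℝ) * StmtAux.Qk k (q : ℝ)) := by push_cast; ring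
        have hX2 : X ^ 2 ≤ (2 * 2 ^ k * Y) ^ 2 := pow_le_pow_left₀ hXnn hXY 2
        have hpow2 : ((2 : ℝ) ^ k) ^ 2 = 4 ^ k := by
          rw [← pow_mul, mul_comm k 2, pow_mul]
          norm_num
        have hfin : (2 * 2 ^ k * Y) ^ 2 = 4 ^ (k + 1) * Y ^ 2 := by
          have : (2 * 2 ^ k * Y) ^ 2 = 4 * ((2:ℝ) ^ k) ^ 2 * Y ^ 2 := by ring
          rw [this, hpow2, pow_succ]
          ring
        have hEpos := Real.exp_pos (2 * B + 1)
        have hEs : 0 ≤ Real.exp (2 * B + 1) ^ s := Real.rpow_nonneg hEpos.le s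
        calc X ^ 2 * Real.exp (2 * B + 1) ^ s
            ≤ X ^ 2 * Real.exp (2 * B + 1) := by
              refine mul_le_mul_of_nonneg_left h3 (by positivity)
          _ ≤ (4 ^ (k + 1) * Y ^ 2) * Real.exp (2 * B + 1) := by
              refine mul_le_mul_of_nonneg_right ?_ hEpos.le
              rw [← hfin]; exact hX2
          _ = 4 ^ (k + 1) * Real.exp (2 * B + 1) * Y * Y := by ring
      have hRspos : 0 < R ^ s := Real.rpow_pos_of_pos hRpos s
      have hstep : h (q + 1) - h q ≤ ((q : ℝ) * StmtAux.Qk k (q : ℝ))⁻¹ := by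
        have hil := StmtAux.iter_log_step k (x := (q : ℝ))
          (fun j hj => hGq.2.1 j (by omega))
        simp only [hh_def]
        rw [show ((q + 1 : ℕ) : ℝ) = (q : ℝ) + 1 by push_cast; ring]
        linarith
      have h9 : c * (h (q + 1) - h q) ≤ (R ^ s)⁻¹ := by
        have h10 : c * (h (q + 1) - h q) ≤ c * ((q : ℝ) * StmtAux.Qk k (q : ℝ))⁻¹ :=
          mul_le_mul_of_nonneg_left hstep hcpos.le
        have h11 : c * ((q : ℝ) * StmtAux.Qk k (q : ℝ))⁻¹
            = (4 ^ (k + 1) * Real.exp (2 * B + 1) * ((q : ℝ) * StmtAux.Qk k (q : ℝ)))⁻¹ := by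
          rw [hc_def, ← mul_inv]
        have h12 : (4 ^ (k + 1) * Real.exp (2 * B + 1) * ((q : ℝ) * StmtAux.Qk k (q : ℝ)))⁻¹
            ≤ (R ^ s)⁻¹ := inv_anti₀ hRspos hRs
        rw [h11] at h10
        linarith
      have h13 : (R ^ s)⁻¹ = R⁻¹ ^ s := (Real.inv_rpow hRpos.le s).symm
      rw [h13] at h9
      linarith
    have hsum : ∀ N, P ≤ N → c * (h N - h P) ≤ ∑ p ∈ Finset.Icc 1 N, (M (p - 1) / M p) ^ s := by
      intro N hN
      induction N, hN using Nat.le_induction with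
      | base =>
        rw [sub_self, mul_zero]
        exact Finset.sum_nonneg fun p _ =>
          Real.rpow_nonneg (div_nonneg (hMpos _).le (hMpos _).le) s
      | succ N hPN ih =>
        rw [Finset.sum_Icc_succ_top (by omega : 1 ≤ N + 1)]
        have hkey := key N hPN
        have hsub : (M (N + 1 - 1) / M (N + 1)) ^ s = (M N / M (N + 1)) ^ s := by
          norm_num
        rw [hsub]
        linarith
    have hh_tendsto : Tendsto h atTop atTop :=
      (StmtAux.tendsto_iter_log (k + 1)).comp tendsto_natCast_atTop_atTop
    have hlow : Tendsto (fun N => c * (h N - h P)) atTop atTop := by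
      refine Tendsto.const_mul_atTop hcpos ?_
      simpa [sub_eq_add_neg] using tendsto_atTop_add_const_right atTop (-(h P)) hh_tendsto
    refine tendsto_atTop_mono' atTop ?_ hlow
    filter_upwards [eventually_ge_atTop P] with N hN
    exact hsum N hN

end
end

section
/- Let d ≥ 1, μ, ν > 0 with μ + ν ≥ 1, 0 ≤ δ ≤ 1, C > 0 and A ≥ 1. If f : ℝ^d → ℂ is a smooth function satisfying ‖⟨x⟩^p ∂_x^β f‖_{L²(ℝ^d)} ≤ C A^{p+|β|} (p!)^ν (|β|!)^μ for all p ∈ ℕ and all multi-indices β ∈ ℕ^d, then for all p ∈ ℕ and β ∈ ℕ^d: ‖⟨x⟩^{δp} ∂_x^β f‖_{L²(ℝ^d)} ≤ C (8^ν e^ν A)^{p+|β|} (p!)^{δν} (|β|!)^μ. -/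
open MeasureTheory Filter
open scoped ENNReal NNReal

noncomputable section

lemma pow_self_le_factorial_mul_exp (n : ℕ) :
    (n : ℝ) ^ n ≤ (n.factorial : ℝ) * Real.exp n := by
  induction n with
  | zero => simp
  | succ n ih =>
    have hexp1 : (1:ℝ) ≤ Real.exp 1 := Real.one_le_exp zero_le_one
    have key : ((n:ℝ)+1)^n ≤ (n:ℝ)^n * Real.exp 1 := by
      rcases Nat.eq_zero_or_pos n with h | h
      · subst h; simpa using hexp1
      · have hn : (0:ℝ) < n := by exact_mod_cast h
        have h1 : (n:ℝ)+1 ≤ (n:ℝ) * Real.exp (1/n) := by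
          have h2 := Real.add_one_le_exp (1/(n:ℝ))
          have := mul_le_mul_of_nonneg_left h2 hn.le
          calc (n:ℝ)+1 = n * (1/n + 1) := by field_simp; ring
            _ ≤ n * Real.exp (1/n) := by linarith
        calc ((n:ℝ)+1)^n ≤ ((n:ℝ) * Real.exp (1/n))^n :=
              pow_le_pow_left₀ (by positivity) h1 n
          _ = (n:ℝ)^n * (Real.exp (1/n))^n := mul_pow _ _ _
          _ = (n:ℝ)^n * Real.exp 1 := by
              rw [← Real.exp_nat_mul]
              congr 1
              field_simp
    have hfac : (1:ℝ) ≤ (n.factorial : ℝ) := by exact_mod_cast n.factorial_pos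
    calc ((n+1 : ℕ):ℝ)^(n+1) = ((n:ℝ)+1) * ((n:ℝ)+1)^n := by push_cast; ring
      _ ≤ ((n:ℝ)+1) * ((n:ℝ)^n * Real.exp 1) := by
          apply mul_le_mul_of_nonneg_left key (by positivity)
      _ ≤ ((n:ℝ)+1) * (((n.factorial:ℝ) * Real.exp n) * Real.exp 1) := by
          apply mul_le_mul_of_nonneg_left (mul_le_mul_of_nonneg_right ih (Real.exp_pos 1).le)
            (by positivity)
      _ = ((n+1).factorial : ℝ) * Real.exp ((n:ℝ)+1) := by
          rw [Nat.factorial_succ, Real.exp_add]; push_cast; ring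
      _ = ((n+1).factorial : ℝ) * Real.exp ((n+1 : ℕ):ℝ) := by push_cast; ring_nf

lemma ceil_factorial_le (δ : ℝ) (hδ0 : 0 ≤ δ) (hδ1 : δ ≤ 1) (p : ℕ) :
    ((⌈δ * p⌉₊.factorial : ℕ) : ℝ) ≤ (8 * Real.exp 1) ^ p * (p.factorial : ℝ) ^ δ := by
  set q : ℕ := ⌈δ * p⌉₊ with hq
  have hfacp : (1:ℝ) ≤ (p.factorial : ℝ) := by exact_mod_cast p.factorial_pos
  have hrpow1 : (1:ℝ) ≤ (p.factorial : ℝ) ^ δ := Real.one_le_rpow hfacp hδ0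
  have h8e : (1:ℝ) ≤ 8 * Real.exp 1 := by nlinarith [Real.one_le_exp (le_refl 0 |>.trans zero_le_one)]
  rcases Nat.eq_zero_or_pos q with hq0 | hq1
  · rw [hq0]
    calc ((Nat.factorial 0 : ℕ):ℝ) = 1 := by norm_num
      _ ≤ (8 * Real.exp 1) ^ p * 1 := by
          rw [mul_one]; exact one_le_pow₀ h8e
      _ ≤ (8 * Real.exp 1) ^ p * (p.factorial : ℝ) ^ δ := by
          apply mul_le_mul_of_nonneg_left hrpow1 (by positivity)
  · -- q ≥ 1, hence p ≥ 1
    have hqp : q ≤ p := Nat.ceil_le.mpr (by nlinarith [Nat.cast_nonneg (α := ℝ) p])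
    have hp1 : 1 ≤ p := le_trans hq1 hqp
    have hpR : (1:ℝ) ≤ (p:ℝ) := by exact_mod_cast hp1
    have hqle : (q:ℝ) ≤ δ * p + 1 := (Nat.ceil_lt_add_one (by positivity)).le
    have h2p : (1:ℝ) ≤ 2 * p := by linarith
    have h2p0 : (0:ℝ) < 2 * p := by linarith
    have hδp0 : (0:ℝ) ≤ δ * p := by positivity
    -- 2p ≤ 4^p
    have h2p4 : (2 * (p:ℝ)) ≤ 4 ^ p := by
      have : 2 * p ≤ 4 ^ p := by
        calc 2 * p ≤ 2 * 2 ^ p := by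
              exact Nat.mul_le_mul_left 2 (Nat.lt_two_pow_self (n := p)).le
          _ = 2 ^ (p + 1) := by ring
          _ ≤ 2 ^ (2 * p) := Nat.pow_le_pow_right (by norm_num) (by omega)
          _ = 4 ^ p := by rw [pow_mul]; norm_num
      exact_mod_cast this
    calc ((q.factorial : ℕ):ℝ) ≤ (q:ℝ) ^ q := by exact_mod_cast Nat.factorial_le_pow q
      _ ≤ (2 * (p:ℝ)) ^ q := by
          apply pow_le_pow_left₀ (Nat.cast_nonneg q)
          have : (q:ℝ) ≤ (p:ℝ) := by exact_mod_cast hqp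
          linarith
      _ = (2 * (p:ℝ)) ^ ((q : ℕ):ℝ) := (Real.rpow_natCast _ _).symm
      _ ≤ (2 * (p:ℝ)) ^ (δ * p + 1) := Real.rpow_le_rpow_of_exponent_le h2p hqle
      _ = (2:ℝ) ^ (δ * p) * (p:ℝ) ^ (δ * p) * (2 * p) := by
          rw [Real.rpow_add h2p0, Real.rpow_one,
            Real.mul_rpow (by norm_num) (Nat.cast_nonneg p)]
      _ ≤ (2:ℝ) ^ (δ * p) * ((p.factorial : ℝ) * Real.exp p) ^ δ * (2 * p) := by
          apply mul_le_mul_of_nonneg_right _ h2p0.le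
          apply mul_le_mul_of_nonneg_left _ (Real.rpow_nonneg (by norm_num) _)
          calc (p:ℝ) ^ (δ * p) = ((p:ℝ) ^ ((p:ℕ):ℝ)) ^ δ := by
                rw [← Real.rpow_mul (Nat.cast_nonneg p), mul_comm]
            _ ≤ ((p.factorial : ℝ) * Real.exp p) ^ δ := by
                apply Real.rpow_le_rpow (by positivity) _ hδ0
                rw [Real.rpow_natCast]
                exact pow_self_le_factorial_mul_exp p
      _ = (p.factorial : ℝ) ^ δ * ((2 * Real.exp 1) ^ (δ * p) * (2 * p)) := by
          rw [Real.mul_rpow (Nat.cast_nonneg _) (Real.exp_pos _).le,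
            Real.mul_rpow (by norm_num) (Real.exp_pos _).le, Real.exp_one_rpow,
            ← Real.exp_mul, mul_comm (p:ℝ) δ]
          ring
      _ ≤ (p.factorial : ℝ) ^ δ * ((2 * Real.exp 1) ^ ((p:ℕ):ℝ) * 4 ^ p) := by
          apply mul_le_mul_of_nonneg_left _ (Real.rpow_nonneg (by positivity) _)
          apply mul_le_mul _ h2p4 h2p0.le (by positivity)
          apply Real.rpow_le_rpow_of_exponent_le (by nlinarith [Real.one_le_exp (zero_le_one (α := ℝ) |>.trans (le_refl 1))]) (by nlinarith)
      _ = (8 * Real.exp 1) ^ p * (p.factorial : ℝ) ^ δ := by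
          rw [Real.rpow_natCast, ← mul_pow]
          ring_nf


/-- Lemma `interpolation`: fractional powers of the Japanese bracket. -/
theorem stmt_10 (d : ℕ) (hd : 1 ≤ d) (μ ν : ℝ) (hμ : 0 < μ) (hν : 0 < ν) (hμν : 1 ≤ μ + ν)
    (δ : ℝ) (hδ0 : 0 ≤ δ) (hδ1 : δ ≤ 1) (C A : ℝ) (hC : 0 < C) (hA : 1 ≤ A)
    (f : Esp d → ℂ) (hf : ContDiff ℝ (⊤ : ℕ∞) f)
    (hbound : ∀ (p : ℕ) (β : Fin d → ℕ),
      eLpNorm (fun x => ((jap x ^ p : ℝ) : ℂ) * mderiv β f x) 2 volume ≤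
        ENNReal.ofReal (C * A ^ (p + ∑ i, β i) *
          (p.factorial : ℝ) ^ ν * (((∑ i, β i).factorial : ℝ)) ^ μ)) :
    ∀ (p : ℕ) (β : Fin d → ℕ),
      eLpNorm (fun x => ((jap x ^ (δ * p) : ℝ) : ℂ) * mderiv β f x) 2 volume ≤
        ENNReal.ofReal (C * ((8 : ℝ) ^ ν * Real.exp ν * A) ^ (p + ∑ i, β i) *
          (p.factorial : ℝ) ^ (δ * ν) * (((∑ i, β i).factorial : ℝ)) ^ μ) := by
  intro p β
  set q : ℕ := ⌈δ * p⌉₊ with hqdef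
  set B : ℕ := ∑ i, β i with hBdef
  have hjap1 : ∀ x : Esp d, 1 ≤ jap x := by
    intro x
    rw [jap]
    nlinarith [Real.sq_sqrt (show (0:ℝ) ≤ 1 + ‖x‖ ^ 2 by positivity),
      Real.sqrt_nonneg (1 + ‖x‖ ^ 2), sq_nonneg ‖x‖]
  have hqp : q ≤ p := Nat.ceil_le.mpr (by nlinarith [Nat.cast_nonneg (α := ℝ) p])
  have hmono : eLpNorm (fun x => ((jap x ^ (δ * p) : ℝ) : ℂ) * mderiv β f x) 2 volume ≤
      eLpNorm (fun x => ((jap x ^ q : ℝ) : ℂ) * mderiv β f x) 2 volume := by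
    apply eLpNorm_mono
    intro x
    simp only [norm_mul, Complex.norm_real, Real.norm_eq_abs]
    apply mul_le_mul_of_nonneg_right _ (norm_nonneg _)
    have h0 : (0:ℝ) ≤ jap x := le_trans zero_le_one (hjap1 x)
    rw [abs_of_nonneg (Real.rpow_nonneg h0 _), abs_of_nonneg (pow_nonneg h0 _)]
    calc jap x ^ (δ * p) ≤ jap x ^ ((q : ℕ) : ℝ) :=
          Real.rpow_le_rpow_of_exponent_le (hjap1 x) (Nat.le_ceil _)
      _ = jap x ^ (q : ℕ) := Real.rpow_natCast _ _
  refine le_trans (le_trans hmono (hbound q β)) (ENNReal.ofReal_le_ofReal ?_)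
  have h8e : (1:ℝ) ≤ 8 * Real.exp 1 := by nlinarith [Real.one_le_exp (zero_le_one (α := ℝ))]
  have h8e0 : (0:ℝ) < 8 * Real.exp 1 := lt_of_lt_of_le zero_lt_one h8e
  have h8eν : (8:ℝ) ^ ν * Real.exp ν = (8 * Real.exp 1) ^ ν := by
    rw [Real.mul_rpow (by norm_num) (Real.exp_pos 1).le, Real.exp_one_rpow]
  have hbase1 : (1:ℝ) ≤ (8:ℝ) ^ ν * Real.exp ν := by
    rw [h8eν]; exact Real.one_le_rpow h8e hν.le
  have hbase0 : (0:ℝ) ≤ (8:ℝ) ^ ν * Real.exp ν := le_trans zero_le_one hbase1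
  have key1 : ((q.factorial : ℕ):ℝ) ^ ν ≤
      ((8:ℝ) ^ ν * Real.exp ν) ^ (p + B) * (p.factorial : ℝ) ^ (δ * ν) := by
    calc ((q.factorial : ℕ):ℝ) ^ ν
        ≤ ((8 * Real.exp 1) ^ p * (p.factorial : ℝ) ^ δ) ^ ν :=
          Real.rpow_le_rpow (Nat.cast_nonneg _) (ceil_factorial_le δ hδ0 hδ1 p) hν.le
      _ = ((8:ℝ) ^ ν * Real.exp ν) ^ p * (p.factorial : ℝ) ^ (δ * ν) := by
          rw [Real.mul_rpow (by positivity) (Real.rpow_nonneg (Nat.cast_nonneg _) _),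
            ← Real.rpow_natCast (8 * Real.exp 1) p, ← Real.rpow_mul h8e0.le,
            mul_comm (p:ℝ) ν, Real.rpow_mul h8e0.le, Real.rpow_natCast,
            ← Real.rpow_mul (Nat.cast_nonneg _), h8eν]
      _ ≤ ((8:ℝ) ^ ν * Real.exp ν) ^ (p + B) * (p.factorial : ℝ) ^ (δ * ν) := by
          apply mul_le_mul_of_nonneg_right
            (pow_le_pow_right₀ hbase1 (Nat.le_add_right p B))
            (Real.rpow_nonneg (Nat.cast_nonneg _) _)
  have key2 : A ^ (q + B) ≤ A ^ (p + B) :=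
    pow_le_pow_right₀ hA (Nat.add_le_add_right hqp B)
  have hA0 : (0:ℝ) ≤ A := le_trans zero_le_one hA
  calc C * A ^ (q + B) * ((q.factorial : ℕ):ℝ) ^ ν * ((B.factorial : ℝ)) ^ μ
      ≤ C * A ^ (p + B) *
        (((8:ℝ) ^ ν * Real.exp ν) ^ (p + B) * (p.factorial : ℝ) ^ (δ * ν)) *
        ((B.factorial : ℝ)) ^ μ := by
        apply mul_le_mul_of_nonneg_right _ (Real.rpow_nonneg (Nat.cast_nonneg _) _)
        apply mul_le_mul (mul_le_mul_of_nonneg_left key2 hC.le) key1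
          (Real.rpow_nonneg (Nat.cast_nonneg _) _) (by positivity)
    _ = C * ((8:ℝ) ^ ν * Real.exp ν * A) ^ (p + B) *
        (p.factorial : ℝ) ^ (δ * ν) * ((B.factorial : ℝ)) ^ μ := by
        rw [mul_pow]; ring

end
end

section
/- Let 0 < s ≤ 1, A ≥ 1 and let M_s = (A^p (p!)^s)_{p∈ℕ}. Then: (i) if 0 < s < 1, for all 0 < t ≤ 1 and r > 0 one has n_{t,M_s,r} ≤ 2^{1/(1−s)}(1 − log t + (Ar)^{1/(1−s)}); (ii) if s = 1, for all 0 < t ≤ 1 and r > 0 one has n_{t,M_1,r} ≤ (1 − log t) e^{Ar}; (iii) for every p ≥ 1, 0 ≤ γ_{M_s}(p) ≤ s. -/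
open MeasureTheory Filter
open scoped ENNReal NNReal

noncomputable section

/-- The Gevrey-type sequence `M_s = (A^p (p!)^s)_p`. -/
def gevreySeq (A s : ℝ) (p : ℕ) : ℝ := A ^ p * (p.factorial : ℝ) ^ s

/-! ### Auxiliary lemmas -/

private lemma ratio_eq' {A s : ℝ} (hA : 1 ≤ A) (k : ℕ) :
    gevreySeq A s k / gevreySeq A s (k + 1) = 1 / (A * ((k : ℝ) + 1) ^ s) := by
  have hA0 : (0 : ℝ) < A := lt_of_lt_of_le one_pos hA
  have hf : (0 : ℝ) < (k.factorial : ℝ) := by exact_mod_cast k.factorial_pos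
  have h1 : (0 : ℝ) < (k : ℝ) + 1 := by positivity
  simp only [gevreySeq, Nat.factorial_succ]
  push_cast
  rw [Real.mul_rpow h1.le hf.le, pow_succ]
  have hfs : (0:ℝ) < (k.factorial : ℝ) ^ s := Real.rpow_pos_of_pos hf s
  have h1s : (0:ℝ) < ((k:ℝ) + 1) ^ s := Real.rpow_pos_of_pos h1 s
  field_simp

private lemma ratio_eq {A s : ℝ} (hA : 1 ≤ A) (n : ℕ) (hn : 1 ≤ n) :
    gevreySeq A s (n - 1) / gevreySeq A s n = 1 / (A * (n : ℝ) ^ s) := by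
  obtain ⟨k, rfl⟩ : ∃ k, n = k + 1 := ⟨n - 1, by omega⟩
  have hc : ((k + 1 : ℕ) : ℝ) = (k : ℝ) + 1 := by push_cast; ring
  rw [Nat.add_sub_cancel, hc]
  exact ratio_eq' hA k

private lemma ratio2 {A s : ℝ} (hA : 1 ≤ A) (k : ℕ) :
    gevreySeq A s (k + 2) * gevreySeq A s k / (gevreySeq A s (k + 1)) ^ 2
      = (((k : ℝ) + 2) / ((k : ℝ) + 1)) ^ s := by
  have hA0 : (0 : ℝ) < A := lt_of_lt_of_le one_pos hA
  have hf : (0 : ℝ) < (k.factorial : ℝ) := by exact_mod_cast k.factorial_pos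
  have h1 : (0 : ℝ) < (k : ℝ) + 1 := by positivity
  have h2 : (0 : ℝ) < (k : ℝ) + 2 := by positivity
  simp only [gevreySeq, Nat.factorial_succ]
  push_cast
  have e : ((k:ℝ) + 1 + 1) = (k:ℝ) + 2 := by ring
  rw [e, Real.div_rpow h2.le h1.le, Real.mul_rpow h2.le (by positivity),
    Real.mul_rpow h1.le hf.le]
  have hfs : (0:ℝ) < (k.factorial : ℝ) ^ s := Real.rpow_pos_of_pos hf s
  have h1s : (0:ℝ) < ((k:ℝ) + 1) ^ s := Real.rpow_pos_of_pos h1 s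
  have h2s : (0:ℝ) < ((k:ℝ) + 2) ^ s := Real.rpow_pos_of_pos h2 s
  field_simp
  ring

private lemma nat_sSup_le {S : Set ℕ} {B : ℝ} (h0 : 0 ∈ S) (h : ∀ N ∈ S, (N : ℝ) ≤ B) :
    ((sSup S : ℕ) : ℝ) ≤ B := by
  have hbdd : BddAbove S := ⟨⌊B⌋₊, fun n hn => Nat.le_floor (h n hn)⟩
  exact h _ (Nat.sSup_mem ⟨0, h0⟩ hbdd)

private lemma sum_eq {A s t : ℝ} (hA : 1 ≤ A) (ht : 0 < t) (ht1 : t ≤ 1) (N : ℕ) :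
    (∑ n ∈ Finset.Icc 1 N,
        if -Real.log t < (n : ℝ) then gevreySeq A s (n - 1) / gevreySeq A s n else 0)
      = ∑ n ∈ Finset.Icc (Nat.floor (-Real.log t) + 1) N, 1 / (A * (n : ℝ) ^ s) := by
  have hL0 : (0:ℝ) ≤ -Real.log t := neg_nonneg.mpr (Real.log_nonpos ht.le ht1)
  have hfil : (Finset.Icc 1 N).filter (fun n : ℕ => -Real.log t < (n : ℝ))
      = Finset.Icc (Nat.floor (-Real.log t) + 1) N := by
    ext n
    simp only [Finset.mem_filter, Finset.mem_Icc]
    rw [← Nat.floor_lt hL0]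
    omega
  rw [← Finset.sum_filter, hfil]
  refine Finset.sum_congr rfl fun n hn => ?_
  have hn1 : 1 ≤ n := by
    have := (Finset.mem_Icc.mp hn).1; omega
  exact ratio_eq hA n hn1

private lemma telescope (f : ℕ → ℝ) {m N : ℕ} (h : m ≤ N + 1) :
    ∑ n ∈ Finset.Icc m N, (f (n + 1) - f n) = f (N + 1) - f m := by
  rw [← Finset.Ico_add_one_right_eq_Icc, Finset.sum_Ico_eq_sub _ h,
    Finset.sum_range_sub f, Finset.sum_range_sub f]
  ring

set_option maxHeartbeats 2000000 in
/-- Lemma `ex_qa_sequence`: quantitative bounds on the Bang degree and on `γ_M`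
for the sequences `M_s = (A^p (p!)^s)_p`. -/
theorem stmt_11 (s A : ℝ) (hs0 : 0 < s) (hs1 : s ≤ 1) (hA : 1 ≤ A) :
    (s < 1 → ∀ t r : ℝ, 0 < t → t ≤ 1 → 0 < r →
      (bangDeg (gevreySeq A s) t r : ℝ) ≤
        2 ^ (1 / (1 - s)) * (1 - Real.log t + (A * r) ^ (1 / (1 - s)))) ∧
    (s = 1 → ∀ t r : ℝ, 0 < t → t ≤ 1 → 0 < r →
      (bangDeg (gevreySeq A s) t r : ℝ) ≤ (1 - Real.log t) * Real.exp (A * r)) ∧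
    (∀ p : ℕ, 1 ≤ p → 0 ≤ gammaM (gevreySeq A s) p ∧ gammaM (gevreySeq A s) p ≤ s) := by
  have hA0 : (0 : ℝ) < A := lt_of_lt_of_le one_pos hA
  refine ⟨?_, ?_, ?_⟩
  · -- case s < 1
    intro hslt t r ht ht1 hr
    have h1s : (0:ℝ) < 1 - s := by linarith
    have hq0 : (0:ℝ) < 1 / (1 - s) := by positivity
    have hL0 : (0:ℝ) ≤ -Real.log t := neg_nonneg.mpr (Real.log_nonpos ht.le ht1)
    have hm1 : ((Nat.floor (-Real.log t) + 1 : ℕ) : ℝ) ≤ 1 + -Real.log t := by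
      have := Nat.floor_le hL0
      push_cast; linarith
    have h2q : (1:ℝ) ≤ 2 ^ (1 / (1 - s)) := Real.one_le_rpow one_le_two hq0.le
    have hArq : (0:ℝ) ≤ (A * r) ^ (1 / (1 - s)) := Real.rpow_nonneg (by positivity) _
    unfold bangDeg
    apply nat_sSup_le
    · simp [hr]
    · intro N hN
      simp only [Set.mem_setOf_eq] at hN
      rw [sum_eq hA ht ht1 N] at hN
      set m : ℕ := Nat.floor (-Real.log t) + 1 with hmdef
      have hB : 2 ^ (1 / (1 - s)) * ((A*r) ^ (1 / (1 - s)) + (1 + -Real.log t))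
          = 2 ^ (1 / (1 - s)) * (1 - Real.log t + (A * r) ^ (1 / (1 - s))) := by ring
      rcases lt_or_ge N m with hcase | hcase
      · have hNL : (N:ℝ) ≤ -Real.log t := by
          have h1 : N ≤ Nat.floor (-Real.log t) := by omega
          exact le_trans (by exact_mod_cast h1) (Nat.floor_le hL0)
        calc (N:ℝ) ≤ (A*r) ^ (1 / (1 - s)) + (1 + -Real.log t) := by linarith
          _ ≤ 2 ^ (1 / (1 - s)) * ((A*r) ^ (1 / (1 - s)) + (1 + -Real.log t)) :=
              le_mul_of_one_le_left (by positivity) h2q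
          _ = _ := hB
      · -- main case
        have tele := telescope (fun n : ℕ => ((n : ℝ)) ^ (1 - s)) (m := m) (N := N) (by omega)
        have hterm : ∀ n ∈ Finset.Icc m N,
            ((n + 1 : ℕ) : ℝ) ^ (1 - s) - ((n : ℝ)) ^ (1 - s)
              ≤ ((1 - s) * A) * (1 / (A * (n : ℝ) ^ s)) := by
          intro n hn
          have hn1 : 1 ≤ n := le_trans (by omega) (Finset.mem_Icc.mp hn).1
          have hx : (1:ℝ) ≤ (n:ℝ) := by exact_mod_cast hn1
          have hx0 : (0:ℝ) < (n:ℝ) := by linarith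
          have hxs : (0:ℝ) < (n:ℝ) ^ s := Real.rpow_pos_of_pos hx0 s
          have hcast : ((n + 1 : ℕ) : ℝ) = (n:ℝ) + 1 := by push_cast; ring
          have key : ((n:ℝ) + 1) ^ (1 - s) ≤ (n:ℝ) ^ (1 - s) + (1 - s) * ((n:ℝ) ^ (1 - s) / (n:ℝ)) := by
            have e : (n:ℝ) + 1 = (n:ℝ) * (1 + 1 / (n:ℝ)) := by field_simp
            rw [e, Real.mul_rpow hx0.le (by positivity)]
            have hb : (1 + 1/(n:ℝ)) ^ (1 - s) ≤ 1 + (1 - s) * (1/(n:ℝ)) :=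
              rpow_one_add_le_one_add_mul_self
                (by have : (0:ℝ) ≤ 1/(n:ℝ) := by positivity
                    linarith) h1s.le (by linarith)
            have hnn : (0:ℝ) ≤ (n:ℝ) ^ (1 - s) := Real.rpow_nonneg hx0.le _
            have h2 := mul_le_mul_of_nonneg_left hb hnn
            have h3 : (n:ℝ) ^ (1 - s) * (1 + (1 - s) * (1/(n:ℝ)))
                = (n:ℝ) ^ (1 - s) + (1 - s) * ((n:ℝ) ^ (1 - s) / (n:ℝ)) := by ring
            linarith
          have hpow : (n:ℝ) ^ (1 - s) / (n:ℝ) = 1 / (n:ℝ) ^ s := by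
            rw [Real.rpow_sub hx0, Real.rpow_one]; field_simp
          rw [hpow] at key
          have heq : ((1 - s) * A) * (1 / (A * (n:ℝ) ^ s)) = (1 - s) * (1 / (n:ℝ) ^ s) := by
            field_simp
          rw [hcast, heq]
          linarith
        have hsum2 : ((N + 1 : ℕ) : ℝ) ^ (1 - s) - ((m : ℝ)) ^ (1 - s) ≤ ((1 - s) * A) * r := by
          rw [← tele]
          calc ∑ n ∈ Finset.Icc m N, (((n + 1 : ℕ) : ℝ) ^ (1 - s) - ((n : ℝ)) ^ (1 - s))
              ≤ ∑ n ∈ Finset.Icc m N, ((1 - s) * A) * (1 / (A * (n : ℝ) ^ s)) :=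
                Finset.sum_le_sum hterm
            _ = ((1 - s) * A) * ∑ n ∈ Finset.Icc m N, 1 / (A * (n : ℝ) ^ s) := by
                rw [Finset.mul_sum]
            _ ≤ ((1 - s) * A) * r :=
                mul_le_mul_of_nonneg_left hN.le (by positivity)
        have hm0 : (0:ℝ) < (m:ℝ) := by
          have : 0 < m := by omega
          exact_mod_cast this
        have hcastN : ((N + 1 : ℕ) : ℝ) = (N:ℝ) + 1 := by push_cast; ring
        rw [hcastN] at hsum2
        have hst : ((N:ℝ) + 1) ^ (1 - s) ≤ (m:ℝ) ^ (1 - s) + A * r := by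
          nlinarith [mul_nonneg hs0.le (mul_pos hA0 hr).le]
        have hNle : (N:ℝ) + 1 ≤ ((m:ℝ) ^ (1 - s) + A * r) ^ (1 / (1 - s)) := by
          have h1 : ((N:ℝ) + 1) = (((N:ℝ) + 1) ^ (1 - s)) ^ (1 / (1 - s)) := by
            rw [← Real.rpow_mul (by positivity), mul_one_div, div_self (ne_of_gt h1s),
              Real.rpow_one]
          rw [h1]
          exact Real.rpow_le_rpow (Real.rpow_nonneg (by positivity) _) hst hq0.le
        have hbq : ((m:ℝ) ^ (1 - s)) ^ (1 / (1 - s)) = (m:ℝ) := by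
          rw [← Real.rpow_mul hm0.le, mul_one_div, div_self (ne_of_gt h1s), Real.rpow_one]
        have ha0 : (0:ℝ) < A * r := by positivity
        have hb0 : (0:ℝ) < (m:ℝ) ^ (1 - s) := Real.rpow_pos_of_pos hm0 _
        have hmax : (m:ℝ) ^ (1 - s) + A * r ≤ 2 * max (A * r) ((m:ℝ) ^ (1 - s)) := by
          have h1 := le_max_left (A * r) ((m:ℝ) ^ (1 - s))
          have h2 := le_max_right (A * r) ((m:ℝ) ^ (1 - s))
          linarith
        have hsplit : ((m:ℝ) ^ (1 - s) + A * r) ^ (1 / (1 - s))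
            ≤ 2 ^ (1 / (1 - s)) * ((A * r) ^ (1 / (1 - s)) + (m:ℝ)) := by
          calc ((m:ℝ) ^ (1 - s) + A * r) ^ (1 / (1 - s))
              ≤ (2 * max (A * r) ((m:ℝ) ^ (1 - s))) ^ (1 / (1 - s)) :=
                Real.rpow_le_rpow (by positivity) hmax hq0.le
            _ = 2 ^ (1 / (1 - s)) * (max (A * r) ((m:ℝ) ^ (1 - s))) ^ (1 / (1 - s)) :=
                Real.mul_rpow (by norm_num) (le_max_of_le_left ha0.le)
            _ ≤ 2 ^ (1 / (1 - s)) * ((A * r) ^ (1 / (1 - s)) + (m:ℝ)) := by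
                apply mul_le_mul_of_nonneg_left _ (Real.rpow_nonneg (by norm_num) _)
                rcases max_cases (A * r) ((m:ℝ) ^ (1 - s)) with ⟨h, _⟩ | ⟨h, _⟩ <;> rw [h]
                · nlinarith [hbq, hm0]
                · rw [hbq]; nlinarith [hArq]
        calc (N:ℝ) ≤ (N:ℝ) + 1 := by linarith
          _ ≤ ((m:ℝ) ^ (1 - s) + A * r) ^ (1 / (1 - s)) := hNle
          _ ≤ 2 ^ (1 / (1 - s)) * ((A * r) ^ (1 / (1 - s)) + (m:ℝ)) := hsplit
          _ ≤ 2 ^ (1 / (1 - s)) * ((A * r) ^ (1 / (1 - s)) + (1 + -Real.log t)) := by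
              apply mul_le_mul_of_nonneg_left _ (Real.rpow_nonneg (by norm_num) _)
              linarith
          _ = _ := hB
  · -- case s = 1
    intro hseq t r ht ht1 hr
    subst hseq
    have hL0 : (0:ℝ) ≤ -Real.log t := neg_nonneg.mpr (Real.log_nonpos ht.le ht1)
    have hm1 : ((Nat.floor (-Real.log t) + 1 : ℕ) : ℝ) ≤ 1 + -Real.log t := by
      have := Nat.floor_le hL0
      push_cast; linarith
    have hexp : (1:ℝ) ≤ Real.exp (A * r) := Real.one_le_exp (by positivity)
    have h1L : (0:ℝ) < 1 + -Real.log t := by linarith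
    have hB : (1 + -Real.log t) * Real.exp (A * r) = (1 - Real.log t) * Real.exp (A * r) := by
      ring
    unfold bangDeg
    apply nat_sSup_le
    · simp [hr]
    · intro N hN
      simp only [Set.mem_setOf_eq] at hN
      rw [sum_eq hA ht ht1 N] at hN
      set m : ℕ := Nat.floor (-Real.log t) + 1 with hmdef
      rcases lt_or_ge N m with hcase | hcase
      · have hNL : (N:ℝ) ≤ -Real.log t := by
          have h1 : N ≤ Nat.floor (-Real.log t) := by omega
          exact le_trans (by exact_mod_cast h1) (Nat.floor_le hL0)
        calc (N:ℝ) ≤ (1 + -Real.log t) * 1 := by linarith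
          _ ≤ (1 + -Real.log t) * Real.exp (A * r) :=
              mul_le_mul_of_nonneg_left hexp h1L.le
          _ = _ := hB
      · have tele := telescope (fun n : ℕ => Real.log (n : ℝ)) (m := m) (N := N) (by omega)
        have hterm : ∀ n ∈ Finset.Icc m N,
            Real.log ((n + 1 : ℕ) : ℝ) - Real.log (n : ℝ)
              ≤ A * (1 / (A * (n : ℝ) ^ (1:ℝ))) := by
          intro n hn
          have hn1 : 1 ≤ n := le_trans (by omega) (Finset.mem_Icc.mp hn).1
          have hx : (1:ℝ) ≤ (n:ℝ) := by exact_mod_cast hn1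
          have hx0 : (0:ℝ) < (n:ℝ) := by linarith
          have hcast : ((n + 1 : ℕ) : ℝ) = (n:ℝ) + 1 := by push_cast; ring
          have hdiv : (0:ℝ) < ((n:ℝ) + 1) / (n:ℝ) := by positivity
          have hlog : Real.log (((n:ℝ) + 1) / (n:ℝ)) ≤ ((n:ℝ) + 1) / (n:ℝ) - 1 :=
            Real.log_le_sub_one_of_pos hdiv
          rw [Real.log_div (by linarith) (ne_of_gt hx0)] at hlog
          have he1 : ((n:ℝ) + 1) / (n:ℝ) - 1 = 1 / (n:ℝ) := by field_simp; ring
          have he2 : A * (1 / (A * (n : ℝ) ^ (1:ℝ))) = 1 / (n:ℝ) := by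
            rw [Real.rpow_one]; field_simp
          rw [hcast, he2]
          linarith [hlog, he1 ▸ hlog]
        have hsum2 : Real.log ((N + 1 : ℕ) : ℝ) - Real.log (m : ℝ) ≤ A * r := by
          rw [← tele]
          calc ∑ n ∈ Finset.Icc m N, (Real.log ((n + 1 : ℕ) : ℝ) - Real.log (n : ℝ))
              ≤ ∑ n ∈ Finset.Icc m N, A * (1 / (A * (n : ℝ) ^ (1:ℝ))) :=
                Finset.sum_le_sum hterm
            _ = A * ∑ n ∈ Finset.Icc m N, 1 / (A * (n : ℝ) ^ (1:ℝ)) := by rw [Finset.mul_sum]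
            _ ≤ A * r := mul_le_mul_of_nonneg_left hN.le hA0.le
        have hm0 : (0:ℝ) < (m:ℝ) := by
          have : 0 < m := by omega
          exact_mod_cast this
        have hcastN : ((N + 1 : ℕ) : ℝ) = (N:ℝ) + 1 := by push_cast; ring
        rw [hcastN] at hsum2
        have hfin : (N:ℝ) + 1 ≤ (m:ℝ) * Real.exp (A * r) := by
          have h1 : (N:ℝ) + 1 = Real.exp (Real.log ((N:ℝ) + 1)) :=
            (Real.exp_log (by positivity)).symm
          have h2 : (m:ℝ) * Real.exp (A * r) = Real.exp (Real.log (m:ℝ) + A * r) := by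
            rw [Real.exp_add, Real.exp_log hm0]
          rw [h1, h2]
          exact Real.exp_le_exp.mpr (by linarith)
        calc (N:ℝ) ≤ (m:ℝ) * Real.exp (A * r) := by linarith
          _ ≤ (1 + -Real.log t) * Real.exp (A * r) :=
              mul_le_mul_of_nonneg_right hm1 (Real.exp_nonneg _)
          _ = _ := hB
  · -- gamma bounds
    intro p hp
    haveI hne : Nonempty {j : ℕ // 1 ≤ j ∧ j ≤ p} := ⟨⟨1, le_rfl, hp⟩⟩
    have hval : ∀ j : ℕ, 1 ≤ j →
        (j:ℝ) * (gevreySeq A s (j + 1) * gevreySeq A s (j - 1) / (gevreySeq A s j) ^ 2 - 1)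
          = (j:ℝ) * ((((j:ℝ) + 1) / (j:ℝ)) ^ s - 1) := by
      intro j hj
      obtain ⟨k, rfl⟩ : ∃ k, j = k + 1 := ⟨j - 1, by omega⟩
      have hc : ((k + 1 : ℕ) : ℝ) = (k : ℝ) + 1 := by push_cast; ring
      have e2 : (k:ℝ) + 1 + 1 = (k:ℝ) + 2 := by ring
      rw [Nat.add_sub_cancel, show k + 1 + 1 = k + 2 from rfl, ratio2 hA k, hc, e2]
    have hup : ∀ j : ℕ, 1 ≤ j → (j:ℝ) * ((((j:ℝ) + 1) / (j:ℝ)) ^ s - 1) ≤ s := by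
      intro j hj
      have hx : (1:ℝ) ≤ (j:ℝ) := by exact_mod_cast hj
      have hx0 : (0:ℝ) < (j:ℝ) := by linarith
      have he : ((j:ℝ) + 1) / (j:ℝ) = 1 + 1 / (j:ℝ) := by field_simp
      have hb : (1 + 1/(j:ℝ)) ^ s ≤ 1 + s * (1/(j:ℝ)) :=
        rpow_one_add_le_one_add_mul_self
          (by have : (0:ℝ) ≤ 1/(j:ℝ) := by positivity
              linarith) hs0.le hs1
      rw [he]
      have hxx : (j:ℝ) * (s * (1 / (j:ℝ))) = s := by field_simp
      nlinarith [mul_le_mul_of_nonneg_left (sub_le_sub_right hb 1) hx0.le]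
    have hlow : ∀ j : ℕ, 1 ≤ j → 0 ≤ (j:ℝ) * ((((j:ℝ) + 1) / (j:ℝ)) ^ s - 1) := by
      intro j hj
      have hx : (1:ℝ) ≤ (j:ℝ) := by exact_mod_cast hj
      have hx0 : (0:ℝ) < (j:ℝ) := by linarith
      have hbase : (1:ℝ) ≤ ((j:ℝ) + 1) / (j:ℝ) := by
        rw [le_div_iff₀ hx0]; linarith
      have h1 : (1:ℝ) ≤ (((j:ℝ) + 1) / (j:ℝ)) ^ s := Real.one_le_rpow hbase hs0.le
      nlinarith
    have hbdd : BddAbove (Set.range fun j : {j : ℕ // 1 ≤ j ∧ j ≤ p} =>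
        ((j : ℕ) : ℝ) * (gevreySeq A s ((j : ℕ) + 1) * gevreySeq A s ((j : ℕ) - 1) /
          (gevreySeq A s (j : ℕ)) ^ 2 - 1)) := by
      refine ⟨s, ?_⟩
      rintro x ⟨j, rfl⟩
      dsimp only
      rw [hval (j : ℕ) j.2.1]
      exact hup (j : ℕ) j.2.1
    constructor
    · unfold gammaM
      refine le_trans ?_ (le_ciSup hbdd ⟨1, le_rfl, hp⟩)
      dsimp only
      rw [hval 1 le_rfl]
      exact hlow 1 le_rfl
    · unfold gammaM
      refine ciSup_le fun j => ?_
      rw [hval (j : ℕ) j.2.1]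
      exact hup (j : ℕ) j.2.1

end
end

section
/- Let Θ : [0,∞) → [0,∞) be a continuous function such that the associated sequence M^Θ_p = sup_{t≥0} t^p e^{−Θ(t)} consists of positive finite real numbers and is quasi-analytic, i.e. ∑_{p≥1} M^Θ_{p−1}/M^Θ_p = +∞. Then for every T > 0 and every c ≥ 0, the sequence M^{TΘ+c}_p = sup_{t≥0} t^p e^{−(TΘ(t)+c)} also consists of positive finite real numbers and is quasi-analytic: ∑_{p≥1} M^{TΘ+c}_{p−1}/M^{TΘ+c}_p = +∞. -/
open MeasureTheory Filter
open scoped ENNReal NNReal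

noncomputable section

lemma mem_MseqSet (Θ : ℝ → ℝ) (p : ℕ) {t : ℝ} (ht : 0 ≤ t) :
    t ^ p * Real.exp (-Θ t) ∈ MseqSet Θ p := ⟨t, ht, rfl⟩

lemma val_le_Mseq (Θ : ℝ → ℝ) (p : ℕ) {t : ℝ} (ht : 0 ≤ t)
    (hb : BddAbove (MseqSet Θ p)) : t ^ p * Real.exp (-Θ t) ≤ Mseq Θ p :=
  le_csSup hb (mem_MseqSet Θ p ht)

lemma Mseq_sq_le (Θ : ℝ → ℝ) (hb : ∀ p, BddAbove (MseqSet Θ p)) (p : ℕ) (hp : 1 ≤ p) :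
    Mseq Θ p ^ 2 ≤ Mseq Θ (p - 1) * Mseq Θ (p + 1) := by
  have h0 : 0 ≤ Mseq Θ (p - 1) * Mseq Θ (p + 1) := by
    have h1 := val_le_Mseq Θ (p-1) (le_refl (0:ℝ)) (hb _)
    have h2 := val_le_Mseq Θ (p+1) (le_refl (0:ℝ)) (hb _)
    have e1 : (0:ℝ) ^ (p-1) * Real.exp (-Θ 0) ≥ 0 := by positivity
    have e2 : (0:ℝ) ^ (p+1) * Real.exp (-Θ 0) ≥ 0 := by positivity
    nlinarith [le_trans e1 h1, le_trans e2 h2]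
  have hsq : Mseq Θ p ≤ Real.sqrt (Mseq Θ (p - 1) * Mseq Θ (p + 1)) := by
    apply csSup_le ⟨1 ^ p * Real.exp (-Θ 1), mem_MseqSet Θ p zero_le_one⟩
    rintro y ⟨t, ht, rfl⟩
    rw [Real.le_sqrt (by positivity)]
    swap
    · exact h0
    have h1 := val_le_Mseq Θ (p-1) ht (hb _)
    have h2 := val_le_Mseq Θ (p+1) ht (hb _)
    have key : (t ^ p * Real.exp (-Θ t)) ^ 2
        = (t ^ (p-1) * Real.exp (-Θ t)) * (t ^ (p+1) * Real.exp (-Θ t)) := by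
      have h : t ^ (p-1) * t ^ (p+1) = t ^ p * t ^ p := by
        rw [← pow_add, ← pow_add]; congr 1; omega
      calc (t ^ p * Real.exp (-Θ t)) ^ 2
          = (t ^ p * t ^ p) * (Real.exp (-Θ t) * Real.exp (-Θ t)) := by ring
        _ = (t ^ (p-1) * t ^ (p+1)) * (Real.exp (-Θ t) * Real.exp (-Θ t)) := by rw [h]
        _ = _ := by ring
    rw [key]
    exact mul_le_mul h1 h2 (by positivity) (le_trans (by positivity) h1)
  calc Mseq Θ p ^ 2 ≤ Real.sqrt (Mseq Θ (p - 1) * Mseq Θ (p + 1)) ^ 2 := by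
        apply pow_le_pow_left₀ ?_ hsq
        have h1 := val_le_Mseq Θ p zero_le_one (hb _)
        have : (0:ℝ) ≤ 1 ^ p * Real.exp (-Θ 1) := by positivity
        linarith
    _ = Mseq Θ (p - 1) * Mseq Θ (p + 1) := Real.sq_sqrt h0

lemma part1 (Θ : ℝ → ℝ) (hΘ0 : ∀ t : ℝ, 0 ≤ t → 0 ≤ Θ t)
    (hH1 : ∀ p : ℕ, BddAbove (MseqSet Θ p) ∧ 0 < Mseq Θ p)
    (T c : ℝ) (hT : 0 < T) (hc : 0 ≤ c) (p : ℕ) :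
    BddAbove (MseqSet (fun t => T * Θ t + c) p) ∧
      0 < Mseq (fun t => T * Θ t + c) p := by
  set q : ℕ := ⌈(p:ℝ)/T⌉₊ with hq
  have hpq : (p:ℝ) ≤ T * q := by
    rw [mul_comm, ← div_le_iff₀ hT]
    exact Nat.le_ceil _
  have hbdd : BddAbove (MseqSet (fun t => T * Θ t + c) p) := by
    refine ⟨max 1 (Mseq Θ q ^ (T:ℝ)), ?_⟩
    rintro y ⟨t, ht, rfl⟩
    simp only
    rcases le_total t 1 with h1 | h1
    · refine le_max_of_le_left ?_
      have hθ : 0 ≤ T * Θ t + c := by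
        have := mul_nonneg hT.le (hΘ0 t ht); linarith
      calc t ^ p * Real.exp (-(T * Θ t + c))
          ≤ 1 * 1 := by
            apply mul_le_mul (pow_le_one₀ ht h1) ?_ (Real.exp_nonneg _) zero_le_one
            rw [Real.exp_le_one_iff]; linarith
        _ = 1 := by ring
    · refine le_max_of_le_right ?_
      have ht0 : (0:ℝ) < t := lt_of_lt_of_le one_pos h1
      have key : t ^ p * Real.exp (-(T * Θ t + c))
          ≤ (t ^ q * Real.exp (-Θ t)) ^ (T:ℝ) := by
        rw [Real.mul_rpow (by positivity) (Real.exp_nonneg _)]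
        have e1 : (t ^ q : ℝ) ^ (T:ℝ) = t ^ ((q:ℝ) * T) := by
          rw [← Real.rpow_natCast t q, ← Real.rpow_mul ht0.le]
        have e2 : Real.exp (-Θ t) ^ (T:ℝ) = Real.exp (-(T * Θ t)) := by
          rw [← Real.exp_mul]; ring_nf
        rw [e1, e2]
        have e3 : t ^ p ≤ t ^ ((q:ℝ) * T) := by
          rw [← Real.rpow_natCast t p]
          exact Real.rpow_le_rpow_of_exponent_le h1 (by linarith [hpq])
        have e4 : Real.exp (-(T * Θ t + c)) ≤ Real.exp (-(T * Θ t)) := by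
          apply Real.exp_le_exp.mpr; linarith
        exact mul_le_mul e3 e4 (Real.exp_nonneg _) (by positivity)
      refine le_trans key ?_
      exact Real.rpow_le_rpow (by positivity) (val_le_Mseq Θ q ht (hH1 q).1) hT.le
  refine ⟨hbdd, ?_⟩
  have h1 : (1:ℝ) ^ p * Real.exp (-(T * Θ 1 + c)) ≤ Mseq (fun t => T * Θ t + c) p :=
    le_csSup hbdd ⟨1, zero_le_one, rfl⟩
  have : (0:ℝ) < (1:ℝ) ^ p * Real.exp (-(T * Θ 1 + c)) := by positivity
  linarith

lemma log_val (u z : ℝ) (hu : 0 < u) (k : ℕ) :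
    Real.log (u ^ k * Real.exp z) = (k:ℝ) * Real.log u + z := by
  rw [Real.log_mul (by positivity) (Real.exp_ne_zero _), Real.log_pow, Real.log_exp]

lemma pointwise (Θ : ℝ → ℝ) (T c : ℝ) (hT : 0 < T) (p n : ℕ) (hp : 1 ≤ p)
    (hTn : (p:ℝ) ≤ T * ((n:ℝ) - 1))
    (hb1 : BddAbove (MseqSet (fun t => T * Θ t + c) (p-1)))
    (hpos1 : 0 < Mseq (fun t => T * Θ t + c) (p-1))
    (hb2 : BddAbove (MseqSet Θ n)) (hpos2 : 0 < Mseq Θ n)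
    {u v : ℝ} (hu : 0 < u) (hv : 0 < v) :
    (u ^ p * Real.exp (-(T * Θ u + c))) * (v ^ (n-1) * Real.exp (-Θ v))
      ≤ Mseq (fun t => T * Θ t + c) (p-1) * Mseq Θ n := by
  have hn : 2 ≤ n := by
    rcases Nat.lt_or_ge n 2 with h | h
    · exfalso
      have h1 : (n:ℝ) ≤ 1 := by exact_mod_cast Nat.lt_succ_iff.mp h
      have hp1 : (1:ℝ) ≤ p := by exact_mod_cast hp
      nlinarith
    · exact h
  have hcastn : ((n - 1 : ℕ) : ℝ) = (n:ℝ) - 1 := by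
    have : 1 ≤ n := by omega
    push_cast [this]; ring
  have hcastp : ((p - 1 : ℕ) : ℝ) = (p:ℝ) - 1 := by push_cast [hp]; ring
  set lu := Real.log u
  set lv := Real.log v
  set θu := Θ u
  set θv := Θ v
  set m1 := Real.log (Mseq (fun t => T * Θ t + c) (p-1)) with hm1
  set m2 := Real.log (Mseq Θ n) with hm2
  have hX : ((p:ℝ) - 1) * lu - (T * θu + c) ≤ m1 := by
    have h := val_le_Mseq (fun t => T * Θ t + c) (p-1) hu.le hb1
    have := Real.log_le_log (by positivity) h
    rw [log_val u _ hu] at this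
    rw [hcastp] at this
    linarith
  have hY : ((p:ℝ) - 1) * lv - (T * θv + c) ≤ m1 := by
    have h := val_le_Mseq (fun t => T * Θ t + c) (p-1) hv.le hb1
    have := Real.log_le_log (by positivity) h
    rw [log_val v _ hv] at this
    rw [hcastp] at this
    linarith
  have hZ : (n:ℝ) * lu - θu ≤ m2 := by
    have h := val_le_Mseq Θ n hu.le hb2
    have := Real.log_le_log (by positivity) h
    rw [log_val u _ hu] at this
    linarith
  have hW : (n:ℝ) * lv - θv ≤ m2 := by
    have h := val_le_Mseq Θ n hv.le hb2
    have := Real.log_le_log (by positivity) h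
    rw [log_val v _ hv] at this
    linarith
  set A : ℝ := (n:ℝ) * T - p + 1 with hA
  have hApos : 0 < A := by nlinarith
  have hA1 : 1 ≤ A := by nlinarith
  have hAT : T ≤ A := by nlinarith
  have hcomb : (p:ℝ) * lu + ((n:ℝ) - 1) * lv - (T * θu + c) - θv ≤ m1 + m2 := by
    have c1 := mul_le_mul_of_nonneg_left hX (by linarith : (0:ℝ) ≤ A - 1)
    have c3 := mul_le_mul_of_nonneg_left hZ hT.le
    have c4 := mul_le_mul_of_nonneg_left hW (by linarith : (0:ℝ) ≤ A - T)
    have E : A * ((p:ℝ) * lu + ((n:ℝ) - 1) * lv - (T * θu + c) - θv)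
        = (A - 1) * (((p:ℝ) - 1) * lu - (T * θu + c))
          + (((p:ℝ) - 1) * lv - (T * θv + c))
          + T * ((n:ℝ) * lu - θu) + (A - T) * ((n:ℝ) * lv - θv) := by
      rw [hA]; ring
    have hle : A * ((p:ℝ) * lu + ((n:ℝ) - 1) * lv - (T * θu + c) - θv) ≤ A * (m1 + m2) := by
      rw [E]; nlinarith [hY]
    exact le_of_mul_le_mul_left hle hApos
  have hLpos : 0 < (u ^ p * Real.exp (-(T * θu + c))) * (v ^ (n-1) * Real.exp (-θv)) := by
    positivity
  rw [← Real.exp_log hLpos, ← Real.exp_log (mul_pos hpos1 hpos2)]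
  apply Real.exp_le_exp.mpr
  rw [Real.log_mul (ne_of_gt hpos1) (ne_of_gt hpos2),
    Real.log_mul (by positivity) (by positivity), log_val u _ hu, log_val v _ hv, hcastn]
  linarith

lemma ratio_le (Θ : ℝ → ℝ) (hΘ0 : ∀ t : ℝ, 0 ≤ t → 0 ≤ Θ t)
    (hH1 : ∀ p : ℕ, BddAbove (MseqSet Θ p) ∧ 0 < Mseq Θ p)
    (T c : ℝ) (hT : 0 < T) (hc : 0 ≤ c) (p n : ℕ) (hp : 1 ≤ p)
    (hTn : (p:ℝ) ≤ T * ((n:ℝ) - 1)) :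
    Mseq Θ (n-1) / Mseq Θ n ≤
      Mseq (fun t => T * Θ t + c) (p-1) / Mseq (fun t => T * Θ t + c) p := by
  have hn : 2 ≤ n := by
    rcases Nat.lt_or_ge n 2 with h | h
    · exfalso
      have h1 : (n:ℝ) ≤ 1 := by exact_mod_cast Nat.lt_succ_iff.mp h
      have hp1 : (1:ℝ) ≤ p := by exact_mod_cast hp
      nlinarith
    · exact h
  obtain ⟨hb1, hpos1⟩ := part1 Θ hΘ0 hH1 T c hT hc (p-1)
  obtain ⟨hbp, hposp⟩ := part1 Θ hΘ0 hH1 T c hT hc p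
  obtain ⟨hb2, hpos2⟩ := hH1 n
  obtain ⟨hbn1, hposn1⟩ := hH1 (n-1)
  have hprod : Mseq (fun t => T * Θ t + c) p * Mseq Θ (n-1)
      ≤ Mseq (fun t => T * Θ t + c) (p-1) * Mseq Θ n := by
    have hRpos : 0 < Mseq (fun t => T * Θ t + c) (p-1) * Mseq Θ n := mul_pos hpos1 hpos2
    have h1 : Mseq (fun t => T * Θ t + c) p
        ≤ Mseq (fun t => T * Θ t + c) (p-1) * Mseq Θ n / Mseq Θ (n-1) := by
      apply csSup_le (Set.nonempty_of_mem (mem_MseqSet _ _ zero_le_one))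
      rintro y ⟨u, hu, rfl⟩
      simp only
      rcases eq_or_lt_of_le hu with h0 | h0
      · rw [← h0, zero_pow (by omega), zero_mul]
        positivity
      · rw [le_div_iff₀ hposn1]
        have h2 : Mseq Θ (n-1) ≤ Mseq (fun t => T * Θ t + c) (p-1) * Mseq Θ n
            / (u ^ p * Real.exp (-(T * Θ u + c))) := by
          apply csSup_le (Set.nonempty_of_mem (mem_MseqSet _ _ zero_le_one))
          rintro z ⟨v, hv, rfl⟩
          rcases eq_or_lt_of_le hv with h0v | h0v
          · rw [← h0v, zero_pow (by omega), zero_mul]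
            positivity
          · rw [le_div_iff₀ (by positivity), mul_comm]
            exact pointwise Θ T c hT p n hp hTn hb1 hpos1 hb2 hpos2 h0 h0v
        rw [le_div_iff₀ (by positivity)] at h2
        linarith [h2]
    rw [le_div_iff₀ hposn1] at h1
    linarith
  rw [div_le_div_iff₀ hpos2 hposp]
  nlinarith [hprod]

lemma block_sum (a : ℕ → ℝ) (K : ℕ) (hK : 1 ≤ K)
    (hanti : ∀ m n : ℕ, 1 ≤ m → m ≤ n → a n ≤ a m) (N : ℕ) :
    ∑ m ∈ Finset.Ico K (K*(N+1)), a m ≤ (K:ℝ) * ∑ p ∈ Finset.Icc 1 N, a (K*p) := by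
  induction N with
  | zero => simp
  | succ N ih =>
    have hle1 : K ≤ K*(N+1) := Nat.le_mul_of_pos_right K (by omega)
    have hle2 : K*(N+1) ≤ K*(N+2) := Nat.mul_le_mul_left K (by omega)
    rw [← Finset.sum_Ico_consecutive a hle1 hle2]
    have hblock : ∑ m ∈ Finset.Ico (K*(N+1)) (K*(N+2)), a m ≤ (K:ℝ) * a (K*(N+1)) := by
      have := Finset.sum_le_card_nsmul (Finset.Ico (K*(N+1)) (K*(N+2))) a (a (K*(N+1)))
        (fun m hm => hanti (K*(N+1)) m (Nat.one_le_iff_ne_zero.mpr (by positivity)) (Finset.mem_Ico.mp hm).1)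
      rwa [Nat.card_Ico, nsmul_eq_mul, show K*(N+2) - K*(N+1) = K by ring_nf; omega,
        ] at this
    rw [Finset.sum_Icc_succ_top (by omega : 1 ≤ N+1)]
    push_cast
    linarith

lemma transfer (a b : ℕ → ℝ) (K : ℕ) (hK : 1 ≤ K)
    (hanti : ∀ m n : ℕ, 1 ≤ m → m ≤ n → a n ≤ a m)
    (hba : ∀ p : ℕ, 1 ≤ p → a (K*p) ≤ b p)
    (hqa : Tendsto (fun N => ∑ p ∈ Finset.Icc 1 N, a p) atTop atTop) :
    Tendsto (fun N => ∑ p ∈ Finset.Icc 1 N, b p) atTop atTop := by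
  set S := fun N => ∑ p ∈ Finset.Icc 1 N, a p with hS
  have hIco : ∀ X : ℕ, 1 ≤ X → S (X - 1) = ∑ m ∈ Finset.Ico 1 X, a m := by
    intro X hX
    have he : Finset.Icc 1 (X-1) = Finset.Ico 1 X := by
      ext m
      simp only [Finset.mem_Icc, Finset.mem_Ico]
      omega
    rw [hS]
    simp only
    rw [he]
  have key : ∀ N, (S (K*(N+1)-1) - S (K-1)) / (K:ℝ) ≤ ∑ p ∈ Finset.Icc 1 N, b p := by
    intro N
    have hX1 : 1 ≤ K*(N+1) := by
      have : (1:ℕ) * 1 ≤ K * (N+1) := Nat.mul_le_mul hK (by omega)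
      omega
    have h1 := block_sum a K hK hanti N
    have h2 : ∑ p ∈ Finset.Icc 1 N, a (K*p) ≤ ∑ p ∈ Finset.Icc 1 N, b p :=
      Finset.sum_le_sum (fun p hp => hba p (Finset.mem_Icc.mp hp).1)
    have h3 : S (K*(N+1)-1) - S (K-1) = ∑ m ∈ Finset.Ico K (K*(N+1)), a m := by
      rw [hIco _ hX1, hIco _ hK,
        ← Finset.sum_Ico_consecutive a hK (Nat.le_mul_of_pos_right K (by omega))]
      ring
    rw [div_le_iff₀ (by exact_mod_cast hK : (0:ℝ) < K), h3]
    calc ∑ m ∈ Finset.Ico K (K*(N+1)), a m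
        ≤ (K:ℝ) * ∑ p ∈ Finset.Icc 1 N, a (K*p) := h1
      _ ≤ (K:ℝ) * ∑ p ∈ Finset.Icc 1 N, b p := by
          apply mul_le_mul_of_nonneg_left h2 (by positivity)
      _ = (∑ p ∈ Finset.Icc 1 N, b p) * K := by ring
  apply tendsto_atTop_mono key
  apply Tendsto.atTop_div_const (by exact_mod_cast hK : (0:ℝ) < K)
  have hg : Tendsto (fun N => K*(N+1)-1) atTop atTop := by
    apply tendsto_atTop_atTop.mpr
    intro bnd
    refine ⟨bnd, fun n hn => ?_⟩
    have : n + 1 ≤ K * (n+1) := Nat.le_mul_of_pos_left _ (by omega)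
    omega
  simp only [sub_eq_add_neg]
  exact tendsto_atTop_add_const_right atTop _ (hqa.comp hg)

lemma Mratio_anti (Θ : ℝ → ℝ)
    (hH1 : ∀ p : ℕ, BddAbove (MseqSet Θ p) ∧ 0 < Mseq Θ p) :
    ∀ m n : ℕ, 1 ≤ m → m ≤ n → Mseq Θ (n-1) / Mseq Θ n ≤ Mseq Θ (m-1) / Mseq Θ m := by
  intro m n hm hmn
  induction n, hmn using Nat.le_induction with
  | base => exact le_refl _
  | succ n hn ih =>
    refine le_trans ?_ ih
    have hsq := Mseq_sq_le Θ (fun p => (hH1 p).1) n (le_trans hm hn)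
    rw [show n+1-1 = n by omega, div_le_div_iff₀ (hH1 (n+1)).2 (hH1 n).2]
    nlinarith [(hH1 n).2, (hH1 (n-1)).2, (hH1 (n+1)).2]


/-- Lemma `linearcomb` (Alphonse–Martin): quasi-analyticity of the sequence
associated with `TΘ + c`. -/
theorem stmt_19 (Θ : ℝ → ℝ) (hΘc : ContinuousOn Θ (Set.Ici 0))
    (hΘ0 : ∀ t : ℝ, 0 ≤ t → 0 ≤ Θ t)
    (hH1 : ∀ p : ℕ, BddAbove (MseqSet Θ p) ∧ 0 < Mseq Θ p)
    (hqa : QuasiAnalytic (Mseq Θ))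
    (T c : ℝ) (hT : 0 < T) (hc : 0 ≤ c) :
    (∀ p : ℕ, BddAbove (MseqSet (fun t => T * Θ t + c) p) ∧
      0 < Mseq (fun t => T * Θ t + c) p) ∧
    QuasiAnalytic (Mseq (fun t => T * Θ t + c)) := by
  refine ⟨part1 Θ hΘ0 hH1 T c hT hc, ?_⟩
  have hqa' : Tendsto (fun N => ∑ p ∈ Finset.Icc 1 N, Mseq Θ (p-1) / Mseq Θ p)
      atTop atTop := hqa
  unfold QuasiAnalytic
  set K : ℕ := ⌈1/T⌉₊ + 2 with hK
  apply transfer (fun k => Mseq Θ (k-1) / Mseq Θ k)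
    (fun p => Mseq (fun t => T * Θ t + c) (p-1) / Mseq (fun t => T * Θ t + c) p)
    K (by omega) (Mratio_anti Θ hH1) ?_ hqa'
  intro p hp
  set n : ℕ := ⌈(p:ℝ)/T⌉₊ + 1 with hn
  have hTn : (p:ℝ) ≤ T * ((n:ℝ) - 1) := by
    rw [hn]
    push_cast
    have h1 : (p:ℝ)/T ≤ ⌈(p:ℝ)/T⌉₊ := Nat.le_ceil _
    rw [div_le_iff₀ hT] at h1
    nlinarith
  have hnK : n ≤ K * p := by
    have hceil : ⌈(p:ℝ)/T⌉₊ ≤ p * ⌈1/T⌉₊ := by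
      apply Nat.ceil_le.mpr
      push_cast
      calc (p:ℝ)/T = p * (1/T) := by ring
        _ ≤ p * ⌈1/T⌉₊ := by
            apply mul_le_mul_of_nonneg_left (Nat.le_ceil _) (by positivity)
    rw [hn, hK]
    calc ⌈(p:ℝ)/T⌉₊ + 1 ≤ p * ⌈1/T⌉₊ + 1 := by omega
      _ ≤ p * ⌈1/T⌉₊ + 2 * p := by omega
      _ = (⌈1/T⌉₊ + 2) * p := by ring
  calc Mseq Θ (K*p-1) / Mseq Θ (K*p) ≤ Mseq Θ (n-1) / Mseq Θ n :=
        Mratio_anti Θ hH1 n (K*p) (by omega) hnK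
    _ ≤ _ := ratio_le Θ hΘ0 hH1 T c hT hc p n hp hTn


end
end
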